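/- arXiv:1909.11207 — 10 statements merged into one kernel-verified Lean document; each statement's English description precedes it below -/
import Mathlib

section
/- Let K ∈ ℝ^{n×n} be a symmetric positive semidefinite matrix, y ∈ ℝⁿ, and λ > 0. Then ‖K^{1/2}(K + nλ I_n)^{-1} y‖₂² ≤ ‖y‖₂² / (4nλ). -/
open Matrix

open scoped ComplexOrder in
/-- The positive semidefinite square root, as defined in the older Mathlib
(`Matrix.PosSemidef.sqrt`, removed since). -/
noncomputable def Matrix.PosSemidef.sqrt {n : Type*} [Fintype n] [DecidableEq n]
    {𝕜 : Type*} [RCLike 𝕜] {A : Matrix n n 𝕜} (hA : A.PosSemidef) : Matrix n n 𝕜 :=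
  (hA.1.eigenvectorUnitary : Matrix n n 𝕜) *
    diagonal ((RCLike.ofReal ∘ Real.sqrt ∘ hA.1.eigenvalues : n → 𝕜)) *
    (star hA.1.eigenvectorUnitary : Matrix n n 𝕜)
private lemma sqrt_transpose_aux {n : ℕ} {K : Matrix (Fin n) (Fin n) ℝ} (hK : K.PosSemidef) : (hK.sqrt)ᵀ = hK.sqrt := by
  rw [Matrix.PosSemidef.sqrt, ← conjTranspose_eq_transpose_of_trivial]
  simp only [conjTranspose_mul, Unitary.coe_star, star_eq_conjTranspose, conjTranspose_conjTranspose,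
    diagonal_conjTranspose, Matrix.mul_assoc, star_trivial]
private lemma sqrt_mul_self_aux {n : ℕ} {K : Matrix (Fin n) (Fin n) ℝ} (hK : K.PosSemidef) : hK.sqrt * hK.sqrt = K := by
  rw [Matrix.PosSemidef.sqrt]
  have hU : star (↑hK.1.eigenvectorUnitary : Matrix (Fin n) (Fin n) ℝ) *
      (↑hK.1.eigenvectorUnitary : Matrix (Fin n) (Fin n) ℝ) = 1 :=
    Unitary.star_mul_self_of_mem hK.1.eigenvectorUnitary.2
  conv_rhs => rw [hK.1.spectral_theorem, Unitary.conjStarAlgAut_apply]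
  simp only [Matrix.mul_assoc]
  rw [← Matrix.mul_assoc (star (↑hK.1.eigenvectorUnitary : Matrix (Fin n) (Fin n) ℝ)), hU,
    Matrix.one_mul, ← Matrix.mul_assoc (diagonal _), diagonal_mul_diagonal]
  congr 3
  funext i
  simp [Real.mul_self_sqrt (hK.eigenvalues_nonneg i)]

private lemma sq_form {n : ℕ} (A : Matrix (Fin n) (Fin n) ℝ) (x : Fin n → ℝ) :
    x ⬝ᵥ ((Aᵀ * A) *ᵥ x) = (A *ᵥ x) ⬝ᵥ (A *ᵥ x) := by
  rw [← mulVec_mulVec, dotProduct_mulVec, vecMul_transpose]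

/-- ‖K^{1/2}(K + nλ I)⁻¹ y‖₂² ≤ ‖y‖₂² / (4nλ) for K symmetric PSD. -/
theorem sqrt_reg_quad_bound {n : ℕ} (hn : 0 < n)
    {K : Matrix (Fin n) (Fin n) ℝ} (hK : K.PosSemidef)
    (y : Fin n → ℝ) (lam : ℝ) (hlam : 0 < lam) :
    (hK.sqrt *ᵥ ((K + ((n : ℝ) * lam) • (1 : Matrix (Fin n) (Fin n) ℝ))⁻¹ *ᵥ y)) ⬝ᵥ
        (hK.sqrt *ᵥ ((K + ((n : ℝ) * lam) • (1 : Matrix (Fin n) (Fin n) ℝ))⁻¹ *ᵥ y)) ≤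
      (y ⬝ᵥ y) / (4 * n * lam) := by
  set c : ℝ := (n : ℝ) * lam with hc
  have hcpos : 0 < c := by
    have : (0:ℝ) < n := by exact_mod_cast hn
    positivity
  set M : Matrix (Fin n) (Fin n) ℝ := K + c • 1 with hMdef
  -- M is positive definite, hence invertible
  have hI : (c • (1 : Matrix (Fin n) (Fin n) ℝ)).PosDef := by
    refine ⟨?_, fun x hx => ?_⟩
    · simp [Matrix.IsHermitian, conjTranspose_smul]
    · exact ((Matrix.PosDef.one (n := Fin n) (R := ℝ)).smul hcpos).2 hx
  have hMpd : M.PosDef := Matrix.PosDef.posSemidef_add hK hI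
  have hMinv : M * M⁻¹ = 1 := Matrix.mul_nonsing_inv M hMpd.det_pos.ne'.isUnit
  set x : Fin n → ℝ := M⁻¹ *ᵥ y with hx
  have hy : M *ᵥ x = y := by
    rw [hx, mulVec_mulVec, hMinv, one_mulVec]
  set S := hK.sqrt with hS
  have hSsymm : Sᵀ = S := by
    exact sqrt_transpose_aux hK
  have hSS : S * S = K := sqrt_mul_self_aux hK
  have hKsymm : Kᵀ = K := by simpa [Matrix.IsHermitian] using hK.isHermitian
  have hMsymm : Mᵀ = M := by
    rw [hMdef, transpose_add, transpose_smul, transpose_one, hKsymm]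
  -- LHS = x ⬝ K x
  have hlhs : (S *ᵥ x) ⬝ᵥ (S *ᵥ x) = x ⬝ᵥ (K *ᵥ x) := by
    rw [← sq_form S x, hSsymm, hSS]
  -- y ⬝ y = x ⬝ M² x
  have hrhs : y ⬝ᵥ y = x ⬝ᵥ ((M * M) *ᵥ x) := by
    rw [← hy, ← sq_form M x, hMsymm]
  -- key matrix identity: M² = (K - c•1)² + (4c)•K
  set N : Matrix (Fin n) (Fin n) ℝ := K - c • 1 with hNdef
  have hNsymm : Nᵀ = N := by
    rw [hNdef, transpose_sub, transpose_smul, transpose_one, hKsymm]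
  have hid : M * M = N * N + (4 * c) • K := by
    rw [hMdef, hNdef]
    simp only [Matrix.add_mul, Matrix.mul_add, Matrix.sub_mul, Matrix.mul_sub,
      Matrix.smul_mul, Matrix.mul_smul, Matrix.mul_one, Matrix.one_mul, smul_smul]
    module
  have hNx : 0 ≤ x ⬝ᵥ ((N * N) *ᵥ x) := by
    have h2 := sq_form N x
    rw [hNsymm] at h2
    rw [h2]
    exact Finset.sum_nonneg fun i _ => mul_self_nonneg _
  have key : (4 * c) * (x ⬝ᵥ (K *ᵥ x)) ≤ y ⬝ᵥ y := by
    rw [hrhs, hid, add_mulVec, dotProduct_add, smul_mulVec, dotProduct_smul,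
      smul_eq_mul]
    linarith
  rw [hlhs]
  rw [le_div_iff₀ (by positivity : (0:ℝ) < 4 * n * lam)]
  calc x ⬝ᵥ (K *ᵥ x) * (4 * ↑n * lam) = (4 * c) * (x ⬝ᵥ (K *ᵥ x)) := by
        rw [hc]; ring
    _ ≤ y ⬝ᵥ y := key
end

section
/- Let v_1,…,v_s be i.i.d. random feature vectors and ψ a feature map satisfying Assumption 1 with constant b (unbiased: E_v[ψ(x;v)ψ(x';v)] = κ(x,x'); bounded: ψ²(·;·) ≤ b almost surely). For fixed data points x_1,…,x_n with kernel matrix K_{ij} = κ(x_i,x_j), let Ψ ∈ ℝ^{n×s} have entries Ψ_{il} = (1/√s)ψ(x_i; v_l). Then E_{V_s}[ΨΨᵀΨΨᵀ] ⪯ ((s−1)/s)·K² + (nb/s)·K in the Loewner order. -/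
open MeasureTheory Matrix

noncomputable section

/-- Kernel matrix of the fixed points. -/
noncomputable def kerMat {d n : ℕ} (κ : (Fin d → ℝ) → (Fin d → ℝ) → ℝ)
    (X : Fin n → (Fin d → ℝ)) : Matrix (Fin n) (Fin n) ℝ :=
  Matrix.of fun i j => κ (X i) (X j)

/-- Random feature matrix Ψ ∈ ℝ^{n×s} with entries (1/√s)ψ(x_i; v_l). -/
noncomputable def featMat {d n s : ℕ} {V : Type*} (ψ : (Fin d → ℝ) → V → ℝ)
    (X : Fin n → (Fin d → ℝ)) (vs : Fin s → V) : Matrix (Fin n) (Fin s) ℝ :=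
  Matrix.of fun i l => (Real.sqrt s)⁻¹ * ψ (X i) (vs l)

lemma aux_eval_one {s : ℕ} {V : Type*} [MeasurableSpace V] (p : Measure V)
    [IsProbabilityMeasure p] (l : Fin s) (f : V → ℝ) (hf : Integrable f p) :
    Integrable (fun vs : Fin s → V => f (vs l)) (Measure.pi fun _ => p) ∧
    ∫ vs : Fin s → V, f (vs l) ∂(Measure.pi fun _ => p) = ∫ v, f v ∂p := by
  letI : MeasureSpace V := ⟨p⟩
  haveI : SigmaFinite (volume : Measure V) := by
    show SigmaFinite p; infer_instance
  have hvol : (Measure.pi fun _ : Fin s => p) = (volume : Measure (Fin s → V)) := rfl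
  set F : Fin s → V → ℝ := fun c => if c = l then f else fun _ => 1 with hF
  have hFi : ∀ c, Integrable (F c) (volume : Measure V) := by
    intro c
    by_cases h : c = l <;> simp only [hF, h, if_true, if_false]
    · exact hf
    · exact integrable_const 1
  have hprod : ∀ vs : Fin s → V, f (vs l) = ∏ c, F c (vs c) := by
    intro vs
    simp only [hF]
    rw [show (fun c => (if c = l then f else fun _ => (1:ℝ)) (vs c)) =
      (fun c => if c = l then f (vs c) else 1) from by funext c; split <;> rfl]
    rw [Finset.prod_ite_eq']
    simp
  constructor
  · rw [hvol]
    have := MeasureTheory.Integrable.fintype_prod (f := F) hFi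
    exact this.congr (by filter_upwards with vs using (hprod vs).symm)
  · rw [hvol]
    simp_rw [hprod]
    rw [← hvol, MeasureTheory.integral_fintype_prod_eq_prod (f := F)]
    rw [Finset.prod_eq_single l]
    · simp only [hF, if_true]
    · intro c _ hc; simp [hF, hc]
    · simp

lemma aux_eval_two {s : ℕ} {V : Type*} [MeasurableSpace V] (p : Measure V)
    [IsProbabilityMeasure p] {l m : Fin s} (hlm : l ≠ m) (f g : V → ℝ)
    (hf : Integrable f p) (hg : Integrable g p) :
    Integrable (fun vs : Fin s → V => f (vs l) * g (vs m)) (Measure.pi fun _ => p) ∧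
    ∫ vs : Fin s → V, f (vs l) * g (vs m) ∂(Measure.pi fun _ => p) =
      (∫ v, f v ∂p) * ∫ v, g v ∂p := by
  letI : MeasureSpace V := ⟨p⟩
  haveI : SigmaFinite (volume : Measure V) := by
    show SigmaFinite p; infer_instance
  have hvol : (Measure.pi fun _ : Fin s => p) = (volume : Measure (Fin s → V)) := rfl
  set F : Fin s → V → ℝ := fun c => if c = l then f else if c = m then g else fun _ => 1 with hF
  have hFi : ∀ c, Integrable (F c) (volume : Measure V) := by
    intro c
    simp only [hF]
    split
    · exact hf
    · split
      · exact hg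
      · exact integrable_const 1
  have hprod : ∀ vs : Fin s → V, f (vs l) * g (vs m) = ∏ c, F c (vs c) := by
    intro vs
    have : ∀ c, F c (vs c) = if c = l then f (vs c) else if c = m then g (vs c) else 1 := by
      intro c; simp only [hF]; split <;> [rfl; skip]; split <;> rfl
    simp_rw [this]
    rw [← Finset.prod_subset (Finset.subset_univ ({l, m} : Finset (Fin s)))
      (by intro c _ hc
          simp only [Finset.mem_insert, Finset.mem_singleton, not_or] at hc
          simp [hc.1, hc.2])]
    rw [Finset.prod_pair hlm]
    simp [hlm, Ne.symm hlm]
  constructor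
  · rw [hvol]
    have := MeasureTheory.Integrable.fintype_prod (f := F) hFi
    exact this.congr (by filter_upwards with vs using (hprod vs).symm)
  · rw [hvol]
    simp_rw [hprod]
    rw [← hvol, MeasureTheory.integral_fintype_prod_eq_prod (f := F)]
    rw [← Finset.prod_subset (Finset.subset_univ ({l, m} : Finset (Fin s)))
      (by intro c _ hc
          simp only [Finset.mem_insert, Finset.mem_singleton, not_or] at hc
          simp [hF, hc.1, hc.2])]
    rw [Finset.prod_pair hlm]
    simp only [hF, if_true, if_neg (Ne.symm hlm)]

/-- Lemma 2: E_{V_s}[ΨΨᵀΨΨᵀ] ⪯ ((s−1)/s)·K² + (nb/s)·K. -/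
theorem fourth_moment_loewner_bound
    {d n s : ℕ} (hs : 0 < s) {V : Type*} [MeasurableSpace V]
    (p : Measure V) [IsProbabilityMeasure p]
    (ψ : (Fin d → ℝ) → V → ℝ) (hm : ∀ x, Measurable (ψ x))
    (κ : (Fin d → ℝ) → (Fin d → ℝ) → ℝ)
    (b : ℝ) (hb : 0 < b)
    (hunbias : ∀ x x', ∫ v, ψ x v * ψ x' v ∂p = κ x x')
    (hbound : ∀ᵐ v ∂p, ∀ x, (ψ x v) ^ 2 ≤ b)
    (X : Fin n → (Fin d → ℝ)) :
    ((((s : ℝ) - 1) / s) • (kerMat κ X * kerMat κ X) +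
        ((n : ℝ) * b / s) • kerMat κ X -
      Matrix.of (fun i j =>
        ∫ vs : Fin s → V,
          (featMat ψ X vs * (featMat ψ X vs)ᵀ * featMat ψ X vs *
              (featMat ψ X vs)ᵀ) i j
          ∂(Measure.pi fun _ : Fin s => p))).PosSemidef := by
  classical
  have hsR : (0:ℝ) < s := by exact_mod_cast hs
  -- a.e. bounds
  have habs : ∀ᵐ v ∂p, ∀ x, |ψ x v| ≤ Real.sqrt b := by
    filter_upwards [hbound] with v hv x
    calc |ψ x v| = Real.sqrt ((ψ x v)^2) := by rw [Real.sqrt_sq_eq_abs]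
    _ ≤ Real.sqrt b := Real.sqrt_le_sqrt (hv x)
  have habs2 : ∀ᵐ v ∂p, ∀ x y, |ψ x v * ψ y v| ≤ b := by
    filter_upwards [habs] with v hv x y
    rw [abs_mul]
    calc |ψ x v| * |ψ y v| ≤ Real.sqrt b * Real.sqrt b :=
      mul_le_mul (hv x) (hv y) (abs_nonneg _) (Real.sqrt_nonneg b)
    _ = b := Real.mul_self_sqrt hb.le
  -- integrability
  have hint2 : ∀ y z, Integrable (fun v => ψ y v * ψ z v) p := by
    intro y z
    refine (integrable_const b).mono' (((hm y).mul (hm z)).aestronglyMeasurable) ?_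
    filter_upwards [habs2] with v hv
    rw [Real.norm_eq_abs]; exact hv y z
  have hint4 : ∀ y z w u, Integrable (fun v => (ψ y v * ψ z v) * (ψ w v * ψ u v)) p := by
    intro y z w u
    refine (integrable_const (b*b)).mono'
      ((((hm y).mul (hm z)).mul ((hm w).mul (hm u))).aestronglyMeasurable) ?_
    filter_upwards [habs2] with v hv
    rw [Real.norm_eq_abs, abs_mul]
    exact mul_le_mul (hv y z) (hv w u) (abs_nonneg _) hb.le
  set g : V → ℝ := fun v => ∑ k, ψ (X k) v * ψ (X k) v with hg
  set T : Matrix (Fin n) (Fin n) ℝ :=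
    Matrix.of fun i j => ∫ v, (ψ (X i) v * ψ (X j) v) * g v ∂p with hTdef
  have hintg : ∀ i j : Fin n, Integrable (fun v => (ψ (X i) v * ψ (X j) v) * g v) p := by
    intro i j
    have heq : (fun v => (ψ (X i) v * ψ (X j) v) * g v) =
        fun v => ∑ k, (ψ (X i) v * ψ (X j) v) * (ψ (X k) v * ψ (X k) v) := by
      funext v; rw [hg, Finset.mul_sum]
    rw [heq]
    exact integrable_finset_sum _ fun k _ => hint4 _ _ _ _
  have hTsum : ∀ i j, (∑ k, ∫ v, (ψ (X i) v * ψ (X k) v) * (ψ (X k) v * ψ (X j) v) ∂p)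
      = T i j := by
    intro i j
    rw [← integral_finset_sum _ fun k _ => hint4 _ _ _ _]
    show (∫ v, ∑ k, (ψ (X i) v * ψ (X k) v) * (ψ (X k) v * ψ (X j) v) ∂p) = _
    simp only [hTdef, Matrix.of_apply]
    congr 1; funext v
    rw [hg, Finset.mul_sum]
    exact Finset.sum_congr rfl fun k _ => by ring
  -- entrywise value of the expectation matrix
  have hE : (Matrix.of (fun i j =>
        ∫ vs : Fin s → V,
          (featMat ψ X vs * (featMat ψ X vs)ᵀ * featMat ψ X vs *
              (featMat ψ X vs)ᵀ) i j
          ∂(Measure.pi fun _ : Fin s => p)) : Matrix (Fin n) (Fin n) ℝ)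
      = (((s : ℝ) - 1) / s) • (kerMat κ X * kerMat κ X) + (s:ℝ)⁻¹ • T := by
    ext i j
    simp only [Matrix.of_apply]
    set q : ℝ := (s:ℝ)⁻¹ with hqdef
    have key : ∀ vs : Fin s → V,
        (featMat ψ X vs * (featMat ψ X vs)ᵀ * featMat ψ X vs * (featMat ψ X vs)ᵀ) i j
        = ∑ m : Fin s, ∑ k : Fin n, ∑ l : Fin s, q * q *
            ((ψ (X i) (vs l) * ψ (X k) (vs l)) * (ψ (X k) (vs m) * ψ (X j) (vs m))) := by
      intro vs
      have hq : (Real.sqrt s)⁻¹ * (Real.sqrt s)⁻¹ = q := by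
        rw [hqdef, ← mul_inv, Real.mul_self_sqrt (Nat.cast_nonneg s)]
      simp only [Matrix.mul_apply, Matrix.transpose_apply, featMat, Matrix.of_apply,
        Finset.sum_mul, Finset.mul_sum]
      apply Finset.sum_congr rfl; intro m _
      apply Finset.sum_congr rfl; intro k _
      apply Finset.sum_congr rfl; intro l _
      rw [← hq]; ring
    have hfint : ∀ (m : Fin s) (k : Fin n) (l : Fin s),
        Integrable (fun vs : Fin s → V => q * q *
          ((ψ (X i) (vs l) * ψ (X k) (vs l)) * (ψ (X k) (vs m) * ψ (X j) (vs m))))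
          (Measure.pi fun _ : Fin s => p) := by
      intro m k l
      by_cases hlm : l = m
      · subst hlm
        exact ((aux_eval_one p l
          (fun v => (ψ (X i) v * ψ (X k) v) * (ψ (X k) v * ψ (X j) v))
          (hint4 _ _ _ _)).1).const_mul _
      · exact ((aux_eval_two p hlm (fun v => ψ (X i) v * ψ (X k) v)
          (fun v => ψ (X k) v * ψ (X j) v) (hint2 _ _) (hint2 _ _)).1).const_mul _
    simp_rw [key]
    rw [integral_finset_sum _ (fun m _ => integrable_finset_sum _ fun k _ =>
      integrable_finset_sum _ fun l _ => hfint m k l)]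
    have hswap : ∀ m : Fin s,
        (∫ vs : Fin s → V, ∑ k : Fin n, ∑ l : Fin s, q * q *
            ((ψ (X i) (vs l) * ψ (X k) (vs l)) * (ψ (X k) (vs m) * ψ (X j) (vs m)))
          ∂(Measure.pi fun _ : Fin s => p))
        = ∑ k : Fin n, ∑ l : Fin s, ∫ vs : Fin s → V, q * q *
            ((ψ (X i) (vs l) * ψ (X k) (vs l)) * (ψ (X k) (vs m) * ψ (X j) (vs m)))
          ∂(Measure.pi fun _ : Fin s => p) := by
      intro m
      rw [integral_finset_sum _ (fun k _ => integrable_finset_sum _ fun l _ => hfint m k l)]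
      exact Finset.sum_congr rfl fun k _ =>
        integral_finset_sum _ fun l _ => hfint m k l
    simp_rw [hswap]
    have hsum_l : ∀ (m : Fin s) (k : Fin n),
        (∑ l : Fin s, ∫ vs : Fin s → V, q * q *
            ((ψ (X i) (vs l) * ψ (X k) (vs l)) * (ψ (X k) (vs m) * ψ (X j) (vs m)))
          ∂(Measure.pi fun _ : Fin s => p))
        = q * q * (∫ v, (ψ (X i) v * ψ (X k) v) * (ψ (X k) v * ψ (X j) v) ∂p)
          + ((s:ℝ) - 1) * (q * q * (kerMat κ X i k * kerMat κ X k j)) := by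
      intro m k
      rw [← Finset.add_sum_erase _ _ (Finset.mem_univ m)]
      congr 1
      · rw [integral_const_mul]
        rw [(aux_eval_one p m
          (fun v => (ψ (X i) v * ψ (X k) v) * (ψ (X k) v * ψ (X j) v))
          (hint4 _ _ _ _)).2]
      · have hper : ∀ l ∈ Finset.univ.erase m,
            (∫ vs : Fin s → V, q * q *
              ((ψ (X i) (vs l) * ψ (X k) (vs l)) * (ψ (X k) (vs m) * ψ (X j) (vs m)))
              ∂(Measure.pi fun _ : Fin s => p))
            = q * q * (kerMat κ X i k * kerMat κ X k j) := by
          intro l hl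
          have hlm : l ≠ m := Finset.ne_of_mem_erase hl
          rw [integral_const_mul,
            (aux_eval_two p hlm (fun v => ψ (X i) v * ψ (X k) v)
              (fun v => ψ (X k) v * ψ (X j) v) (hint2 _ _) (hint2 _ _)).2,
            hunbias, hunbias]
          rfl
        rw [Finset.sum_congr rfl hper, Finset.sum_const,
          Finset.card_erase_of_mem (Finset.mem_univ m),
          Finset.card_univ, Fintype.card_fin, nsmul_eq_mul, Nat.cast_sub hs]
        push_cast; ring
    simp_rw [hsum_l]
    rw [Finset.sum_const, Finset.card_univ, Fintype.card_fin, nsmul_eq_mul]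
    have hKK : ∑ k : Fin n, (q * q * (∫ v, (ψ (X i) v * ψ (X k) v) * (ψ (X k) v * ψ (X j) v) ∂p)
          + ((s:ℝ) - 1) * (q * q * (kerMat κ X i k * kerMat κ X k j)))
        = q * q * T i j + ((s:ℝ) - 1) * (q * q * (kerMat κ X * kerMat κ X) i j) := by
      rw [Finset.sum_add_distrib, ← Finset.mul_sum, hTsum,
        Matrix.mul_apply, Finset.mul_sum, Finset.mul_sum]
    rw [hKK]
    simp only [Matrix.add_apply, Matrix.smul_apply, smul_eq_mul]
    rw [hqdef]
    field_simp
    ring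
  rw [show ((((s : ℝ) - 1) / s) • (kerMat κ X * kerMat κ X) +
        ((n : ℝ) * b / s) • kerMat κ X -
      Matrix.of (fun i j =>
        ∫ vs : Fin s → V,
          (featMat ψ X vs * (featMat ψ X vs)ᵀ * featMat ψ X vs *
              (featMat ψ X vs)ᵀ) i j
          ∂(Measure.pi fun _ : Fin s => p)))
      = ((n : ℝ) * b / s) • kerMat κ X - (s:ℝ)⁻¹ • T from by rw [hE]; abel]
  -- symmetry facts
  have hKs : ∀ i j, kerMat κ X j i = kerMat κ X i j := by
    intro i j
    show κ (X j) (X i) = κ (X i) (X j)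
    rw [← hunbias, ← hunbias]
    congr 1; funext v; ring
  have hTs : ∀ i j, T j i = T i j := by
    intro i j
    show (∫ v, (ψ (X j) v * ψ (X i) v) * g v ∂p) = ∫ v, (ψ (X i) v * ψ (X j) v) * g v ∂p
    congr 1; funext v; ring
  rw [posSemidef_iff_dotProduct_mulVec]
  constructor
  · show _ = _
    ext i j
    simp only [Matrix.conjTranspose_apply, Matrix.sub_apply, Matrix.smul_apply,
      smul_eq_mul, star_trivial]
    rw [hKs i j, hTs i j]
  · intro x
    have hstar : star x = x := by funext i; exact star_trivial _
    set c : V → ℝ := fun v => ∑ i, x i * ψ (X i) v with hc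
    have expand : ∀ v, c v ^ 2 = ∑ i, ∑ j, (x i * x j) * (ψ (X i) v * ψ (X j) v) := by
      intro v
      rw [hc, sq, Finset.sum_mul_sum]
      exact Finset.sum_congr rfl fun i _ => Finset.sum_congr rfl fun j _ => by ring
    have hc2int : Integrable (fun v => c v ^ 2) p := by
      have : (fun v => c v ^ 2) =
          fun v => ∑ i, ∑ j, (x i * x j) * (ψ (X i) v * ψ (X j) v) := funext expand
      rw [this]
      exact integrable_finset_sum _ fun i _ => integrable_finset_sum _ fun j _ =>
        (hint2 _ _).const_mul _
    have hc2gint : Integrable (fun v => c v ^ 2 * g v) p := by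
      have : (fun v => c v ^ 2 * g v) =
          fun v => ∑ i, ∑ j, (x i * x j) * ((ψ (X i) v * ψ (X j) v) * g v) := by
        funext v
        rw [expand v, Finset.sum_mul]
        exact Finset.sum_congr rfl fun i _ => by
          rw [Finset.sum_mul]
          exact Finset.sum_congr rfl fun j _ => by ring
      rw [this]
      exact integrable_finset_sum _ fun i _ => integrable_finset_sum _ fun j _ =>
        (hintg _ _).const_mul _
    have hq1 : x ⬝ᵥ (kerMat κ X *ᵥ x) = ∫ v, c v ^ 2 ∂p := by
      simp_rw [expand]
      rw [integral_finset_sum _ fun i _ => integrable_finset_sum _ fun j _ =>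
        (hint2 _ _).const_mul _]
      simp only [dotProduct, Matrix.mulVec, dotProduct]
      refine Finset.sum_congr rfl fun i _ => ?_
      rw [integral_finset_sum _ fun j _ => (hint2 _ _).const_mul _, Finset.mul_sum]
      refine Finset.sum_congr rfl fun j _ => ?_
      rw [integral_const_mul, hunbias]
      simp only [kerMat, Matrix.of_apply]
      ring
    have hq2 : x ⬝ᵥ (T *ᵥ x) = ∫ v, c v ^ 2 * g v ∂p := by
      have : (fun v => c v ^ 2 * g v) =
          fun v => ∑ i, ∑ j, (x i * x j) * ((ψ (X i) v * ψ (X j) v) * g v) := by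
        funext v
        rw [expand v, Finset.sum_mul]
        exact Finset.sum_congr rfl fun i _ => by
          rw [Finset.sum_mul]
          exact Finset.sum_congr rfl fun j _ => by ring
      rw [this]
      rw [integral_finset_sum _ fun i _ => integrable_finset_sum _ fun j _ =>
        (hintg _ _).const_mul _]
      simp only [dotProduct, Matrix.mulVec, dotProduct]
      refine Finset.sum_congr rfl fun i _ => ?_
      rw [integral_finset_sum _ fun j _ => (hintg _ _).const_mul _, Finset.mul_sum]
      refine Finset.sum_congr rfl fun j _ => ?_
      rw [integral_const_mul]
      simp only [hTdef, Matrix.of_apply]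
      ring
    have hmono : (∫ v, c v ^ 2 * g v ∂p) ≤ (n : ℝ) * b * ∫ v, c v ^ 2 ∂p := by
      have h1 : (∫ v, c v ^ 2 * g v ∂p) ≤ ∫ v, c v ^ 2 * ((n:ℝ) * b) ∂p := by
        refine integral_mono_ae hc2gint (hc2int.mul_const _) ?_
        filter_upwards [hbound] with v hv
        refine mul_le_mul_of_nonneg_left ?_ (sq_nonneg _)
        calc g v ≤ ∑ _k : Fin n, b := by
              refine Finset.sum_le_sum fun k _ => ?_
              have := hv (X k); nlinarith [hv (X k)]
          _ = (n : ℝ) * b := by rw [Finset.sum_const, Finset.card_univ,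
                Fintype.card_fin, nsmul_eq_mul]
      calc (∫ v, c v ^ 2 * g v ∂p) ≤ ∫ v, c v ^ 2 * ((n:ℝ) * b) ∂p := h1
        _ = (n : ℝ) * b * ∫ v, c v ^ 2 ∂p := by rw [integral_mul_const]; ring
    have hKnn : 0 ≤ ∫ v, c v ^ 2 ∂p := integral_nonneg fun v => sq_nonneg _
    rw [hstar]
    rw [Matrix.sub_mulVec, Matrix.smul_mulVec, Matrix.smul_mulVec,
      dotProduct_sub, dotProduct_smul, dotProduct_smul, smul_eq_mul, smul_eq_mul,
      hq1, hq2]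
    have hsinv : (0:ℝ) ≤ (s:ℝ)⁻¹ := by positivity
    have h2 : (s:ℝ)⁻¹ * (∫ v, c v ^ 2 * g v ∂p) ≤ (s:ℝ)⁻¹ * ((n:ℝ) * b * ∫ v, c v ^ 2 ∂p) :=
      mul_le_mul_of_nonneg_left hmono hsinv
    have h3 : (n:ℝ) * b / s * ∫ v, c v ^ 2 ∂p = (s:ℝ)⁻¹ * ((n:ℝ) * b * ∫ v, c v ^ 2 ∂p) := by
      ring
    linarith
end
end

section
/- Let v_1,…,v_s be i.i.d. random feature vectors and ψ a feature map satisfying Assumption 1 with constant b. For fixed points x_1,…,x_n and a fixed test point x', let K be the kernel matrix, k' ∈ ℝⁿ with k'_i = κ(x_i, x'), Ψ the random feature matrix, and k̃' = Ψ ψ(x'; V_s). Then E_{V_s}[ (k̃' − k')(k̃' − k')ᵀ ] ⪯ (b/s)·K − (1/s)·k'k'ᵀ in the Loewner order. -/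
open MeasureTheory Matrix

noncomputable section

/-- Random feature vector ψ(x; V_s). -/
noncomputable def featVec {d s : ℕ} {V : Type*} (ψ : (Fin d → ℝ) → V → ℝ)
    (vs : Fin s → V) (x : Fin d → ℝ) : Fin s → ℝ :=
  fun l => (Real.sqrt s)⁻¹ * ψ x (vs l)

/-- Approximate kernel vector k̃' = Ψ ψ(x'; V_s). -/
noncomputable def approxKerVec {d n s : ℕ} {V : Type*} (ψ : (Fin d → ℝ) → V → ℝ)
    (X : Fin n → (Fin d → ℝ)) (x' : Fin d → ℝ) (vs : Fin s → V) : Fin n → ℝ :=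
  featMat ψ X vs *ᵥ featVec ψ vs x'

namespace KerVecAux

variable {V : Type*} [MeasurableSpace V] {s : ℕ}

/-- Family of coordinate functions representing `f (vs l) * g (vs m)` as a product. -/
noncomputable def pairFun (f g : V → ℝ) (l m : Fin s) : Fin s → V → ℝ :=
  fun k => if k = l then (if m = l then fun v => f v * g v else f)
    else if k = m then g else fun _ => 1

lemma pairFun_prod (f g : V → ℝ) (l m : Fin s) (vs : Fin s → V) :
    ∏ k, pairFun f g l m k (vs k) = f (vs l) * g (vs m) := by
  by_cases h : m = l
  · subst h
    rw [Finset.prod_eq_single m]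
    · simp [pairFun]
    · intro k _ hk; simp [pairFun, hk]
    · simp
  · rw [← Finset.mul_prod_erase Finset.univ _ (Finset.mem_univ l),
        ← Finset.mul_prod_erase _ _ (show m ∈ Finset.univ.erase l by simp [h])]
    have h1 : ∏ k ∈ (Finset.univ.erase l).erase m, pairFun f g l m k (vs k) = 1 := by
      apply Finset.prod_eq_one
      intro k hk
      simp only [Finset.mem_erase, Finset.mem_univ, and_true] at hk
      simp [pairFun, hk.1, hk.2]
    rw [h1]
    simp [pairFun, h]

lemma pair_integrable (p : Measure V) [IsProbabilityMeasure p]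
    (f g : V → ℝ) (l m : Fin s) (hf : Integrable f p) (hg : Integrable g p)
    (hfg : Integrable (fun v => f v * g v) p) :
    Integrable (fun vs : Fin s → V => f (vs l) * g (vs m))
      (Measure.pi fun _ => p) := by
  letI : MeasureSpace V := ⟨p⟩
  haveI : IsProbabilityMeasure (volume : Measure V) := ‹IsProbabilityMeasure p›
  rw [show (Measure.pi fun _ : Fin s => p) = volume from rfl]
  simp_rw [← pairFun_prod f g l m]
  refine Integrable.fintype_prod (f := pairFun f g l m) (fun k => ?_)
  unfold pairFun
  split_ifs with h1 h2
  · exact hfg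
  · exact hf
  · exact hg
  · exact integrable_const 1

lemma pair_integral (p : Measure V) [IsProbabilityMeasure p] (f g : V → ℝ) (l m : Fin s) :
    ∫ vs : Fin s → V, f (vs l) * g (vs m) ∂(Measure.pi fun _ => p)
      = if l = m then ∫ v, f v * g v ∂p
        else (∫ v, f v ∂p) * ∫ v, g v ∂p := by
  letI : MeasureSpace V := ⟨p⟩
  haveI : IsProbabilityMeasure (volume : Measure V) := ‹IsProbabilityMeasure p›
  rw [show (Measure.pi fun _ : Fin s => p) = volume from rfl]
  simp_rw [← pairFun_prod f g l m]
  rw [show (volume : Measure (Fin s → V)) = Measure.pi fun _ => p from rfl,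
    MeasureTheory.integral_fintype_prod_eq_prod (pairFun f g l m)]
  by_cases h : l = m
  · subst h
    rw [Finset.prod_eq_single l, if_pos rfl]
    · simp only [pairFun, if_pos rfl]; rfl
    · intro k _ hk; simp [pairFun, hk]
    · simp
  · rw [if_neg h]
    have hml : ¬ (m = l) := fun hh => h hh.symm
    rw [← Finset.mul_prod_erase Finset.univ _ (Finset.mem_univ l),
        ← Finset.mul_prod_erase _ _ (show m ∈ Finset.univ.erase l by simp [hml])]
    have h1 : ∏ k ∈ (Finset.univ.erase l).erase m,
        ∫ v, pairFun f g l m k v ∂p = 1 := by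
      apply Finset.prod_eq_one
      intro k hk
      simp only [Finset.mem_erase, Finset.mem_univ, and_true] at hk
      simp [pairFun, hk.1, hk.2]
    rw [h1]
    simp only [pairFun, if_pos rfl, hml, if_neg, ite_false, ite_true, mul_one]

end KerVecAux

/-- Lemma 3: E_{V_s}[(k̃'−k')(k̃'−k')ᵀ] ⪯ (b/s)·K − (1/s)·k'k'ᵀ. -/
theorem ker_vec_variance_loewner_bound
    {d n s : ℕ} (hs : 0 < s) {V : Type*} [MeasurableSpace V]
    (p : Measure V) [IsProbabilityMeasure p]
    (ψ : (Fin d → ℝ) → V → ℝ) (hm : ∀ x, Measurable (ψ x))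
    (κ : (Fin d → ℝ) → (Fin d → ℝ) → ℝ)
    (b : ℝ) (hb : 0 < b)
    (hunbias : ∀ x x', ∫ v, ψ x v * ψ x' v ∂p = κ x x')
    (hbound : ∀ᵐ v ∂p, ∀ x, (ψ x v) ^ 2 ≤ b)
    (X : Fin n → (Fin d → ℝ)) (x' : Fin d → ℝ) :
    ((b / s) • kerMat κ X -
        ((s : ℝ))⁻¹ • vecMulVec (fun i => κ (X i) x') (fun i => κ (X i) x') -
      Matrix.of (fun i j =>
        ∫ vs : Fin s → V,
          (vecMulVec (approxKerVec ψ X x' vs - fun i' => κ (X i') x')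
              (approxKerVec ψ X x' vs - fun i' => κ (X i') x')) i j
          ∂(Measure.pi fun _ : Fin s => p))).PosSemidef := by
  have hs0 : (s : ℝ) ≠ 0 := Nat.cast_ne_zero.mpr hs.ne'
  -- a.e. bound on products of features
  have habs : ∀ x y : Fin d → ℝ, ∀ᵐ v ∂p, |ψ x v * ψ y v| ≤ b := by
    intro x y
    filter_upwards [hbound] with v hv
    have h1 := hv x; have h2 := hv y
    nlinarith [abs_nonneg (ψ x v * ψ y v), sq_abs (ψ x v * ψ y v),
      sq_nonneg (ψ x v), sq_nonneg (ψ y v), hb.le]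
  -- integrability from an a.e. bound
  have hIof : ∀ (C : ℝ) (f : V → ℝ), AEStronglyMeasurable f p →
      (∀ᵐ v ∂p, |f v| ≤ C) → Integrable f p := by
    intro C f hmf hbf
    exact (integrable_const C).mono' hmf (by simpa [Real.norm_eq_abs] using hbf)
  have hig : ∀ x y, Integrable (fun v => ψ x v * ψ y v) p := fun x y =>
    hIof b _ ((hm x).mul (hm y)).aestronglyMeasurable (habs x y)
  -- abbreviations
  set k : Fin n → ℝ := fun i => κ (X i) x' with hkdef
  set a : Fin n → V → ℝ := fun i v => ψ (X i) v * ψ x' v - κ (X i) x' with hadef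
  have ha_int : ∀ i, Integrable (a i) p := fun i =>
    (hig (X i) x').sub (integrable_const _)
  have ha0 : ∀ i, ∫ v, a i v ∂p = 0 := by
    intro i
    rw [hadef]
    rw [integral_sub (hig (X i) x') (integrable_const _), hunbias, integral_const]
    simp
  have habs_a : ∀ i, ∀ᵐ v ∂p, |a i v| ≤ b + |k i| := by
    intro i
    filter_upwards [habs (X i) x'] with v hv
    calc |a i v| ≤ |ψ (X i) v * ψ x' v| + |κ (X i) x'| := abs_sub _ _
      _ ≤ b + |k i| := by exact add_le_add hv le_rfl
  have haa_int : ∀ i j, Integrable (fun v => a i v * a j v) p := by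
    intro i j
    refine hIof ((b + |k i|) * (b + |k j|)) _
      ((((hm (X i)).mul (hm x')).sub measurable_const).mul
        (((hm (X j)).mul (hm x')).sub measurable_const)).aestronglyMeasurable ?_
    filter_upwards [habs_a i, habs_a j] with v h1 h2
    rw [abs_mul]
    exact mul_le_mul h1 h2 (abs_nonneg _) (by positivity)
  -- pointwise identity for the approximate kernel vector
  have happrox : ∀ (i : Fin n) (vs : Fin s → V),
      approxKerVec ψ X x' vs i - κ (X i) x' = (s : ℝ)⁻¹ * ∑ l, a i (vs l) := by
    intro i vs
    have hsq : ((Real.sqrt s)⁻¹ : ℝ) * (Real.sqrt s)⁻¹ = (s : ℝ)⁻¹ := by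
      rw [← mul_inv, Real.mul_self_sqrt (Nat.cast_nonneg s)]
    have hterm : ∀ l : Fin s, (s : ℝ)⁻¹ * a i (vs l)
        = (Real.sqrt s)⁻¹ * ψ (X i) (vs l) * ((Real.sqrt s)⁻¹ * ψ x' (vs l))
          - (s : ℝ)⁻¹ * κ (X i) x' := by
      intro l; rw [hadef, ← hsq]; ring
    rw [Finset.mul_sum]
    simp_rw [hterm]
    rw [Finset.sum_sub_distrib, Finset.sum_const, Finset.card_univ, Fintype.card_fin,
      nsmul_eq_mul, ← mul_assoc, mul_inv_cancel₀ hs0, one_mul]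
    simp only [approxKerVec, featMat, featVec, Matrix.mulVec, dotProduct, Matrix.of_apply]
  -- key entrywise computation of the covariance integral
  have key : ∀ i j : Fin n,
      (∫ vs : Fin s → V,
        (vecMulVec (approxKerVec ψ X x' vs - fun i' => κ (X i') x')
            (approxKerVec ψ X x' vs - fun i' => κ (X i') x')) i j
        ∂(Measure.pi fun _ : Fin s => p))
      = (s : ℝ)⁻¹ * ∫ v, a i v * a j v ∂p := by
    intro i j
    have h1 : ∀ vs : Fin s → V,
        (vecMulVec (approxKerVec ψ X x' vs - fun i' => κ (X i') x')
            (approxKerVec ψ X x' vs - fun i' => κ (X i') x')) i j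
        = (s : ℝ)⁻¹ * (s : ℝ)⁻¹ * ∑ l, ∑ m, a i (vs l) * a j (vs m) := by
      intro vs
      rw [vecMulVec_apply, Pi.sub_apply, Pi.sub_apply, happrox i vs, happrox j vs,
        ← Finset.sum_mul_sum]
      ring
    simp_rw [h1]
    rw [integral_const_mul]
    have h2 : ∫ vs : Fin s → V, (∑ l, ∑ m, a i (vs l) * a j (vs m))
        ∂(Measure.pi fun _ : Fin s => p)
        = ∑ l, ∑ m, ∫ vs : Fin s → V, a i (vs l) * a j (vs m)
            ∂(Measure.pi fun _ : Fin s => p) := by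
      rw [MeasureTheory.integral_finset_sum _ (fun l _ =>
        integrable_finset_sum _ (fun m _ =>
          KerVecAux.pair_integrable p (a i) (a j) l m (ha_int i) (ha_int j) (haa_int i j)))]
      exact Finset.sum_congr rfl fun l _ =>
        MeasureTheory.integral_finset_sum _ (fun m _ =>
          KerVecAux.pair_integrable p (a i) (a j) l m (ha_int i) (ha_int j) (haa_int i j))
    rw [h2]
    simp_rw [KerVecAux.pair_integral p (a i) (a j), ha0, mul_zero]
    simp only [Finset.sum_ite_eq, Finset.mem_univ, if_true]
    rw [Finset.sum_const, Finset.card_univ, Fintype.card_fin, nsmul_eq_mul]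
    field_simp
  -- the second-moment matrix entries
  have hC : ∀ i j, Integrable
      (fun v => (ψ (X i) v * ψ x' v) * (ψ (X j) v * ψ x' v)) p := by
    intro i j
    refine hIof (b * b) _
      (((hm (X i)).mul (hm x')).mul ((hm (X j)).mul (hm x'))).aestronglyMeasurable ?_
    filter_upwards [habs (X i) x', habs (X j) x'] with v h1 h2
    rw [abs_mul]
    exact mul_le_mul h1 h2 (abs_nonneg _) hb.le
  set E : Fin n → Fin n → ℝ :=
    fun i j => ∫ v, (b - ψ x' v ^ 2) * (ψ (X i) v * ψ (X j) v) ∂p with hEdef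
  have hc : ∀ i j, ∫ v, a i v * a j v ∂p
      = (∫ v, (ψ (X i) v * ψ x' v) * (ψ (X j) v * ψ x' v) ∂p) - k i * k j := by
    intro i j
    have hpt : ∀ v, a i v * a j v
        = ((ψ (X i) v * ψ x' v) * (ψ (X j) v * ψ x' v)
            - k i * (ψ (X j) v * ψ x' v) - k j * (ψ (X i) v * ψ x' v)) + k i * k j := by
      intro v; rw [hadef]; simp only [hkdef]; ring
    have hI4 : Integrable (fun v => k i * (ψ (X j) v * ψ x' v)) p :=
      (hig (X j) x').const_mul (k i)
    have hI5 : Integrable (fun v => k j * (ψ (X i) v * ψ x' v)) p :=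
      (hig (X i) x').const_mul (k j)
    have hI3 : Integrable (fun v => ψ (X i) v * ψ x' v * (ψ (X j) v * ψ x' v)
        - k i * (ψ (X j) v * ψ x' v)) p := (hC i j).sub hI4
    have hI2 : Integrable (fun v => (ψ (X i) v * ψ x' v * (ψ (X j) v * ψ x' v)
        - k i * (ψ (X j) v * ψ x' v)) - k j * (ψ (X i) v * ψ x' v)) p := hI3.sub hI5
    simp_rw [hpt]
    rw [integral_add hI2 (integrable_const _), integral_sub hI3 hI5,
      integral_sub (hC i j) hI4, integral_const_mul, integral_const_mul,
      hunbias (X j) x', hunbias (X i) x', integral_const]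
    simp only [measure_univ, ENNReal.toReal_one, probReal_univ, smul_eq_mul, one_mul, hkdef]
    ring
  have hE : ∀ i j, E i j = b * κ (X i) (X j)
      - ∫ v, (ψ (X i) v * ψ x' v) * (ψ (X j) v * ψ x' v) ∂p := by
    intro i j
    simp only [hEdef]
    have hpt : ∀ v, (b - ψ x' v ^ 2) * (ψ (X i) v * ψ (X j) v)
        = b * (ψ (X i) v * ψ (X j) v)
          - (ψ (X i) v * ψ x' v) * (ψ (X j) v * ψ x' v) := by intro v; ring
    simp_rw [hpt]
    rw [integral_sub ((hig (X i) (X j)).const_mul b) (hC i j),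
      integral_const_mul, hunbias]
  -- rewrite the goal matrix
  have hMat : ((b / s) • kerMat κ X -
        ((s : ℝ))⁻¹ • vecMulVec (fun i => κ (X i) x') (fun i => κ (X i) x') -
      Matrix.of (fun i j =>
        ∫ vs : Fin s → V,
          (vecMulVec (approxKerVec ψ X x' vs - fun i' => κ (X i') x')
              (approxKerVec ψ X x' vs - fun i' => κ (X i') x')) i j
          ∂(Measure.pi fun _ : Fin s => p)))
      = Matrix.of (fun i j => (s : ℝ)⁻¹ * E i j) := by
    ext i j
    simp only [Matrix.sub_apply, Matrix.smul_apply, Matrix.of_apply, smul_eq_mul]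
    rw [key i j]
    simp only [kerMat, Matrix.of_apply, vecMulVec_apply]
    rw [hc i j, hE i j]
    field_simp
    simp only [hkdef]; ring
  rw [hMat]
  rw [Matrix.posSemidef_iff_dotProduct_mulVec]
  constructor
  · -- Hermitian
    ext i j
    simp only [Matrix.conjTranspose_apply, Matrix.of_apply, star_trivial]
    congr 1
    simp only [hEdef]
    exact integral_congr_ae (Filter.Eventually.of_forall fun v => by ring)
  · intro u
    have hFint : ∀ i j : Fin n, Integrable
        (fun v => (b - ψ x' v ^ 2) * (u i * ψ (X i) v) * (u j * ψ (X j) v)) p := by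
      intro i j
      have base : Integrable (fun v => (b - ψ x' v ^ 2) * (ψ (X i) v * ψ (X j) v)) p := by
        refine hIof (b * b) _
          ((measurable_const.sub ((hm x').pow_const 2)).mul
            ((hm (X i)).mul (hm (X j)))).aestronglyMeasurable ?_
        filter_upwards [hbound, habs (X i) (X j)] with v hv h2
        rw [abs_mul]
        have h1 : |b - ψ x' v ^ 2| ≤ b := by
          rw [abs_le]; constructor <;> nlinarith [hv x', sq_nonneg (ψ x' v)]
        exact mul_le_mul h1 h2 (abs_nonneg _) hb.le
      exact (base.const_mul (u i * u j)).congr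
        (Filter.Eventually.of_forall fun v => by ring)
    have hterm : ∀ i j : Fin n, u i * ((s : ℝ)⁻¹ * E i j * u j)
        = (s : ℝ)⁻¹ * ∫ v, (b - ψ x' v ^ 2) * (u i * ψ (X i) v) * (u j * ψ (X j) v) ∂p := by
      intro i j
      calc u i * ((s : ℝ)⁻¹ * E i j * u j)
          = (s : ℝ)⁻¹ * ((u i * u j) * E i j) := by ring
        _ = (s : ℝ)⁻¹ * ∫ v, (u i * u j)
              * ((b - ψ x' v ^ 2) * (ψ (X i) v * ψ (X j) v)) ∂p := by
            rw [integral_const_mul]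
        _ = (s : ℝ)⁻¹ * ∫ v, (b - ψ x' v ^ 2) * (u i * ψ (X i) v) * (u j * ψ (X j) v) ∂p := by
            congr 1
            exact integral_congr_ae (Filter.Eventually.of_forall fun v => by ring)
    have hquad : star u ⬝ᵥ (Matrix.of (fun i j => (s : ℝ)⁻¹ * E i j)) *ᵥ u
        = (s : ℝ)⁻¹ * ∫ v, ∑ i, ∑ j,
            (b - ψ x' v ^ 2) * (u i * ψ (X i) v) * (u j * ψ (X j) v) ∂p := by
      simp only [dotProduct, Matrix.mulVec, Matrix.of_apply, Pi.star_apply, star_trivial]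
      calc ∑ i, u i * ∑ j, (s : ℝ)⁻¹ * E i j * u j
          = ∑ i, ∑ j, u i * ((s : ℝ)⁻¹ * E i j * u j) := by
            exact Finset.sum_congr rfl fun i _ => Finset.mul_sum _ _ _
        _ = ∑ i, ∑ j, (s : ℝ)⁻¹ * ∫ v, (b - ψ x' v ^ 2)
              * (u i * ψ (X i) v) * (u j * ψ (X j) v) ∂p := by
            exact Finset.sum_congr rfl fun i _ => Finset.sum_congr rfl fun j _ => hterm i j
        _ = (s : ℝ)⁻¹ * ∑ i, ∑ j, ∫ v, (b - ψ x' v ^ 2)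
              * (u i * ψ (X i) v) * (u j * ψ (X j) v) ∂p := by
            rw [Finset.mul_sum]
            exact Finset.sum_congr rfl fun i _ => (Finset.mul_sum _ _ _).symm
        _ = (s : ℝ)⁻¹ * ∑ i, ∫ v, ∑ j, (b - ψ x' v ^ 2)
              * (u i * ψ (X i) v) * (u j * ψ (X j) v) ∂p := by
            congr 1
            exact Finset.sum_congr rfl fun i _ =>
              (MeasureTheory.integral_finset_sum _ fun j _ => hFint i j).symm
        _ = (s : ℝ)⁻¹ * ∫ v, ∑ i, ∑ j, (b - ψ x' v ^ 2)
              * (u i * ψ (X i) v) * (u j * ψ (X j) v) ∂p := by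
            congr 1
            exact (MeasureTheory.integral_finset_sum _ fun i _ =>
              integrable_finset_sum _ fun j _ => hFint i j).symm
    rw [hquad]
    refine mul_nonneg (by positivity) (integral_nonneg_of_ae ?_)
    filter_upwards [hbound] with v hv
    have hsum : ∑ i, ∑ j, (b - ψ x' v ^ 2) * (u i * ψ (X i) v) * (u j * ψ (X j) v)
        = (b - ψ x' v ^ 2) * (∑ i, u i * ψ (X i) v) ^ 2 := by
      rw [pow_two (∑ i, u i * ψ (X i) v), Finset.sum_mul_sum, Finset.mul_sum]
      exact Finset.sum_congr rfl fun i _ => by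
        rw [Finset.mul_sum]
        exact Finset.sum_congr rfl fun j _ => by ring
    rw [hsum]
    exact mul_nonneg (sub_nonneg.2 (hv x')) (sq_nonneg _)
end
end

section
/- Let v_1,…,v_s be i.i.d. random feature vectors and ψ a feature map satisfying Assumption 1 with constant b. For fixed points x_1,…,x_n and a fixed test point x', let K be the kernel matrix, k' ∈ ℝⁿ with k'_i = κ(x_i, x'), and k̃' = Ψ ψ(x'; V_s). Then E_{V_s}[ k̃' k̃'ᵀ ] ⪯ ((s−1)/s)·k'k'ᵀ + (b/s)·K in the Loewner order. -/
open MeasureTheory Matrix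

lemma aux_pair_eq {V : Type*} [MeasurableSpace V] (p : Measure V) [IsProbabilityMeasure p]
    {s : ℕ} (f g : V → ℝ) (l m : Fin s) :
    ∫ vs : Fin s → V, f (vs l) * g (vs m) ∂(Measure.pi fun _ : Fin s => p) =
      if l = m then ∫ v, f v * g v ∂p else (∫ v, f v ∂p) * (∫ v, g v ∂p) := by
  letI : MeasureSpace V := ⟨p⟩
  haveI : IsProbabilityMeasure (volume : Measure V) := ‹IsProbabilityMeasure p›
  have hvol : (Measure.pi fun _ : Fin s => p) = (volume : Measure (Fin s → V)) :=
    (MeasureTheory.volume_pi).symm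
  rw [hvol]
  by_cases h : l = m
  · subst h
    simp only [if_pos rfl]
    have hprod := MeasureTheory.integral_fintype_prod_eq_prod (𝕜 := ℝ)
      (fun k v => if k = l then f v * g v else 1) (μ := fun _ => (volume : Measure V))
    rw [← MeasureTheory.volume_pi] at hprod
    have h1 : (fun vs : Fin s → V => f (vs l) * g (vs l)) =
        fun vs : Fin s → V => ∏ k, (if k = l then f (vs k) * g (vs k) else 1) := by
      funext vs
      rw [Finset.prod_ite_eq' Finset.univ l (fun k => f (vs k) * g (vs k))]
      simp
    have h2 : ∀ k : Fin s, (∫ v, (if k = l then f v * g v else 1)) =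
        if k = l then (∫ v, f v * g v) else 1 := by
      intro k; split_ifs with hk <;> simp
    rw [h1]
    simp only [hprod, h2]
    rw [Finset.prod_ite_eq' Finset.univ l (fun _ => ∫ v, f v * g v)]
    simp only [Finset.mem_univ, if_true]
    rfl
  · simp only [if_neg h]
    have hprod := MeasureTheory.integral_fintype_prod_eq_prod (𝕜 := ℝ)
      (fun k v => if k = l then f v else if k = m then g v else 1) (μ := fun _ => (volume : Measure V))
    rw [← MeasureTheory.volume_pi] at hprod
    have h1 : (fun vs : Fin s → V => f (vs l) * g (vs m)) =
        fun vs : Fin s → V => ∏ k, (if k = l then f (vs k) else if k = m then g (vs k) else 1) := by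
      funext vs
      rw [← Finset.prod_subset (Finset.subset_univ ({l, m} : Finset (Fin s)))
        (by intro x _ hx; simp at hx; simp [hx.1, hx.2])]
      rw [Finset.prod_pair h]
      simp [h, Ne.symm h]
    have h2 : ∀ k : Fin s, (∫ v, (if k = l then f v else if k = m then g v else 1)) =
        if k = l then (∫ v, f v) else if k = m then (∫ v, g v) else 1 := by
      intro k; split_ifs <;> simp
    rw [h1]
    simp only [hprod, h2]
    rw [← Finset.prod_subset (Finset.subset_univ ({l, m} : Finset (Fin s)))
      (by intro x _ hx; simp at hx; simp [hx.1, hx.2])]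
    rw [Finset.prod_pair h]
    simp only [if_pos rfl, if_neg h, if_neg (Ne.symm h)]
    rfl

lemma aux_pair_int {V : Type*} [MeasurableSpace V] (p : Measure V) [IsProbabilityMeasure p]
    {s : ℕ} (f g : V → ℝ) (hf : Integrable f p) (hg : Integrable g p)
    (hfg : Integrable (fun v => f v * g v) p) (l m : Fin s) :
    Integrable (fun vs : Fin s → V => f (vs l) * g (vs m)) (Measure.pi fun _ : Fin s => p) := by
  letI : MeasureSpace V := ⟨p⟩
  haveI : IsProbabilityMeasure (volume : Measure V) := ‹IsProbabilityMeasure p›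
  have hvol : (Measure.pi fun _ : Fin s => p) = (volume : Measure (Fin s → V)) :=
    (MeasureTheory.volume_pi).symm
  rw [hvol]
  by_cases h : l = m
  · subst h
    have h1 : (fun vs : Fin s → V => f (vs l) * g (vs l)) =
        fun vs : Fin s → V => ∏ k, (if k = l then f (vs k) * g (vs k) else 1) := by
      funext vs
      rw [Finset.prod_ite_eq' Finset.univ l (fun k => f (vs k) * g (vs k))]
      simp
    rw [h1]
    exact MeasureTheory.Integrable.fintype_prod (f := fun k v => if k = l then f v * g v else 1)
      (fun k => by dsimp only; split_ifs <;> [exact hfg; exact integrable_const 1])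
  · have h1 : (fun vs : Fin s → V => f (vs l) * g (vs m)) =
        fun vs : Fin s → V => ∏ k, (if k = l then f (vs k) else if k = m then g (vs k) else 1) := by
      funext vs
      rw [← Finset.prod_subset (Finset.subset_univ ({l, m} : Finset (Fin s)))
        (by intro x _ hx; simp at hx; simp [hx.1, hx.2])]
      rw [Finset.prod_pair h]
      simp [h, Ne.symm h]
    rw [h1]
    exact MeasureTheory.Integrable.fintype_prod
      (f := fun k v => if k = l then f v else if k = m then g v else 1)
      (fun k => by dsimp only; split_ifs <;> [exact hf; exact hg; exact integrable_const 1])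

noncomputable section

/-- E_{V_s}[k̃'k̃'ᵀ] ⪯ ((s−1)/s)·k'k'ᵀ + (b/s)·K. -/
theorem approx_ker_vec_second_moment_loewner_bound
    {d n s : ℕ} (hs : 0 < s) {V : Type*} [MeasurableSpace V]
    (p : Measure V) [IsProbabilityMeasure p]
    (ψ : (Fin d → ℝ) → V → ℝ) (hm : ∀ x, Measurable (ψ x))
    (κ : (Fin d → ℝ) → (Fin d → ℝ) → ℝ)
    (b : ℝ) (hb : 0 < b)
    (hunbias : ∀ x x', ∫ v, ψ x v * ψ x' v ∂p = κ x x')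
    (hbound : ∀ᵐ v ∂p, ∀ x, (ψ x v) ^ 2 ≤ b)
    (X : Fin n → (Fin d → ℝ)) (x' : Fin d → ℝ) :
    ((((s : ℝ) - 1) / s) •
        vecMulVec (fun i => κ (X i) x') (fun i => κ (X i) x') +
        (b / s) • kerMat κ X -
      Matrix.of (fun i j =>
        ∫ vs : Fin s → V,
          (vecMulVec (approxKerVec ψ X x' vs) (approxKerVec ψ X x' vs)) i j
          ∂(Measure.pi fun _ : Fin s => p))).PosSemidef := by
  classical
  have hs0 : ((s:ℝ)) ≠ 0 := Nat.cast_ne_zero.mpr hs.ne'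
  have hbnn : (0:ℝ) ≤ b := hb.le
  have habs : ∀ᵐ v ∂p, ∀ x y : Fin d → ℝ, |ψ x v * ψ y v| ≤ b := by
    filter_upwards [hbound] with v hv x y
    have h1 := hv x; have h2 := hv y
    rw [abs_mul]
    nlinarith [sq_abs (ψ x v), sq_abs (ψ y v), abs_nonneg (ψ x v), abs_nonneg (ψ y v),
      sq_nonneg (|ψ x v| - |ψ y v|)]
  have hmeas2 : ∀ x y : Fin d → ℝ, Measurable fun v => ψ x v * ψ y v :=
    fun x y => (hm x).mul (hm y)
  have hint2 : ∀ x y : Fin d → ℝ, Integrable (fun v => ψ x v * ψ y v) p := by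
    intro x y
    refine Integrable.mono' (integrable_const b) ((hmeas2 x y).aestronglyMeasurable) ?_
    filter_upwards [habs] with v hv
    rw [Real.norm_eq_abs]
    exact hv x y
  have hint4 : ∀ x y : Fin d → ℝ, Integrable (fun v => ψ x v * ψ y v * ψ x' v ^ 2) p := by
    intro x y
    refine Integrable.mono' (integrable_const (b * b))
      (((hmeas2 x y).mul ((hm x').pow_const 2)).aestronglyMeasurable) ?_
    filter_upwards [habs, hbound] with v hv hv2
    have hxy := hv x y
    have hx' := hv2 x'
    have habsform : ‖ψ x v * ψ y v * ψ x' v ^ 2‖ = |ψ x v * ψ y v| * ψ x' v ^ 2 := by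
      rw [Real.norm_eq_abs, abs_mul, abs_of_nonneg (sq_nonneg (ψ x' v))]
    rw [habsform]
    exact mul_le_mul hxy hx' (sq_nonneg _) hbnn
  set g : Fin n → V → ℝ := fun i v => ψ (X i) v * ψ x' v with hgdef
  have hgint : ∀ i, Integrable (g i) p := fun i => hint2 _ _
  have hggint : ∀ i j, Integrable (fun v => g i v * g j v) p := by
    intro i j
    have heq : (fun v => g i v * g j v) = fun v => ψ (X i) v * ψ (X j) v * ψ x' v ^ 2 := by
      funext v; simp only [hgdef]; ring
    rw [heq]; exact hint4 _ _
  have hA : ∀ (vs : Fin s → V) i, approxKerVec ψ X x' vs i = ∑ l, (s:ℝ)⁻¹ * g i (vs l) := by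
    intro vs i
    have hss : (Real.sqrt s)⁻¹ * (Real.sqrt s)⁻¹ = (s:ℝ)⁻¹ := by
      rw [← mul_inv, Real.mul_self_sqrt (by positivity)]
    simp only [approxKerVec, featMat, featVec, mulVec, dotProduct, Matrix.of_apply]
    refine Finset.sum_congr rfl fun l _ => ?_
    simp only [hgdef]
    rw [show (Real.sqrt s)⁻¹ * ψ (X i) (vs l) * ((Real.sqrt s)⁻¹ * ψ x' (vs l)) =
      ((Real.sqrt s)⁻¹ * (Real.sqrt s)⁻¹) * (ψ (X i) (vs l) * ψ x' (vs l)) by ring, hss]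
  have hκ : ∀ i, ∫ v, g i v ∂p = κ (X i) x' := fun i => hunbias _ _
  have entry : ∀ i j, (∫ vs : Fin s → V,
      approxKerVec ψ X x' vs i * approxKerVec ψ X x' vs j
        ∂(Measure.pi fun _ : Fin s => p)) =
      (((s:ℝ) - 1)/s) * (κ (X i) x' * κ (X j) x') + (s:ℝ)⁻¹ * ∫ v, g i v * g j v ∂p := by
    intro i j
    have h1 : (fun vs : Fin s → V =>
        approxKerVec ψ X x' vs i * approxKerVec ψ X x' vs j)
        = fun vs => ∑ l, ∑ m, ((s:ℝ)⁻¹ * (s:ℝ)⁻¹) * (g i (vs l) * g j (vs m)) := by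
      funext vs
      rw [hA, hA, Finset.sum_mul_sum]
      exact Finset.sum_congr rfl fun l _ => Finset.sum_congr rfl fun m _ => by ring
    rw [h1]
    rw [integral_finset_sum _ (fun l _ => integrable_finset_sum _ (fun m _ =>
      ((aux_pair_int p (g i) (g j) (hgint i) (hgint j) (hggint i j) l m).const_mul _)))]
    have h2 : ∀ l : Fin s, (∫ vs : Fin s → V,
        ∑ m, ((s:ℝ)⁻¹ * (s:ℝ)⁻¹) * (g i (vs l) * g j (vs m)) ∂(Measure.pi fun _ : Fin s => p))
        = ∑ m : Fin s, ((s:ℝ)⁻¹ * (s:ℝ)⁻¹) *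
          (if l = m then ∫ v, g i v * g j v ∂p else κ (X i) x' * κ (X j) x') := by
      intro l
      rw [integral_finset_sum _ (fun m _ =>
        (aux_pair_int p (g i) (g j) (hgint i) (hgint j) (hggint i j) l m).const_mul _)]
      refine Finset.sum_congr rfl fun m _ => ?_
      rw [integral_const_mul, aux_pair_eq p (g i) (g j) l m, hκ i, hκ j]
    simp only [h2]
    have h3 : ∀ l : Fin s, (∑ m : Fin s, ((s:ℝ)⁻¹ * (s:ℝ)⁻¹) *
        (if l = m then ∫ v, g i v * g j v ∂p else κ (X i) x' * κ (X j) x'))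
        = (s:ℝ) * (((s:ℝ)⁻¹ * (s:ℝ)⁻¹) * (κ (X i) x' * κ (X j) x'))
          + ((s:ℝ)⁻¹ * (s:ℝ)⁻¹) * (∫ v, g i v * g j v ∂p)
          - ((s:ℝ)⁻¹ * (s:ℝ)⁻¹) * (κ (X i) x' * κ (X j) x') := by
      intro l
      have hsplit : ∀ m : Fin s, ((s:ℝ)⁻¹ * (s:ℝ)⁻¹) *
          (if l = m then ∫ v, g i v * g j v ∂p else κ (X i) x' * κ (X j) x')
          = ((s:ℝ)⁻¹ * (s:ℝ)⁻¹) * (κ (X i) x' * κ (X j) x')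
            + (if l = m then ((s:ℝ)⁻¹ * (s:ℝ)⁻¹) * (∫ v, g i v * g j v ∂p)
              - ((s:ℝ)⁻¹ * (s:ℝ)⁻¹) * (κ (X i) x' * κ (X j) x') else 0) := by
        intro m; split_ifs <;> ring
      simp only [hsplit, Finset.sum_add_distrib, Finset.sum_const, Finset.card_univ,
        Fintype.card_fin, Finset.sum_ite_eq, Finset.mem_univ, if_true, nsmul_eq_mul]
      ring
    simp only [h3]
    rw [Finset.sum_const, Finset.card_univ, Fintype.card_fin, nsmul_eq_mul]
    field_simp
    ring
  have hMeq : ((((s : ℝ) - 1) / s) •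
        vecMulVec (fun i => κ (X i) x') (fun i => κ (X i) x') +
        (b / s) • kerMat κ X -
      Matrix.of (fun i j =>
        ∫ vs : Fin s → V,
          (vecMulVec (approxKerVec ψ X x' vs) (approxKerVec ψ X x' vs)) i j
          ∂(Measure.pi fun _ : Fin s => p)))
      = Matrix.of (fun i j => (s:ℝ)⁻¹ * (b * κ (X i) (X j) - ∫ v, g i v * g j v ∂p)) := by
    ext i j
    simp only [Matrix.sub_apply, Matrix.add_apply, Matrix.smul_apply, Matrix.of_apply,
      smul_eq_mul, vecMulVec_apply, kerMat]
    rw [entry i j]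
    field_simp
    ring
  rw [hMeq]
  have hκsymm : ∀ x y, κ x y = κ y x := by
    intro x y
    rw [← hunbias x y, ← hunbias y x]
    exact integral_congr_ae (Filter.Eventually.of_forall fun v => mul_comm _ _)
  have hMsymm : ∀ i j : Fin n, (∫ v, g j v * g i v ∂p) = ∫ v, g i v * g j v ∂p :=
    fun i j => integral_congr_ae (Filter.Eventually.of_forall fun v => mul_comm _ _)
  rw [Matrix.posSemidef_iff_dotProduct_mulVec]
  constructor
  · show _ = _
    ext i j
    simp only [Matrix.conjTranspose_apply, Matrix.of_apply, star_trivial]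
    rw [hκsymm (X j) (X i), hMsymm i j]
  · intro x
    have key : (0:ℝ) ≤ ∫ v, (∑ i, x i * ψ (X i) v)^2 * (b - ψ x' v ^ 2) ∂p := by
      refine integral_nonneg_of_ae ?_
      filter_upwards [hbound] with v hv
      exact mul_nonneg (sq_nonneg _) (by linarith [hv x'])
    have expand : (∫ v, (∑ i, x i * ψ (X i) v)^2 * (b - ψ x' v ^ 2) ∂p)
        = ∑ i, ∑ j, (x i * x j) * (b * κ (X i) (X j) - ∫ v, g i v * g j v ∂p) := by
      have hpt : (fun v => (∑ i, x i * ψ (X i) v)^2 * (b - ψ x' v ^ 2))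
          = fun v => ∑ i, ∑ j, (x i * x j) *
            (b * (ψ (X i) v * ψ (X j) v) - g i v * g j v) := by
        funext v
        simp only [hgdef]
        rw [sq, Finset.sum_mul_sum, Finset.sum_mul]
        refine Finset.sum_congr rfl fun i _ => ?_
        rw [Finset.sum_mul]
        refine Finset.sum_congr rfl fun j _ => ?_
        ring
      have hintsub : ∀ i j : Fin n,
          Integrable (fun v => b * (ψ (X i) v * ψ (X j) v) - g i v * g j v) p :=
        fun i j => ((hint2 (X i) (X j)).const_mul b).sub (hggint i j)
      have hintsub2 : ∀ i j : Fin n, Integrable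
          (fun v => (x i * x j) * (b * (ψ (X i) v * ψ (X j) v) - g i v * g j v)) p :=
        fun i j => (hintsub i j).const_mul _
      rw [hpt]
      rw [integral_finset_sum _ (fun i _ => integrable_finset_sum _ (fun j _ => hintsub2 i j))]
      refine Finset.sum_congr rfl fun i _ => ?_
      rw [integral_finset_sum _ (fun j _ => hintsub2 i j)]
      refine Finset.sum_congr rfl fun j _ => ?_
      rw [integral_const_mul, integral_sub ((hint2 (X i) (X j)).const_mul b) (hggint i j),
        integral_const_mul, hunbias]
    have hdot : dotProduct (star x)
        ((Matrix.of fun i j => (s:ℝ)⁻¹ * (b * κ (X i) (X j) - ∫ v, g i v * g j v ∂p)) *ᵥ x)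
        = (s:ℝ)⁻¹ * ∑ i, ∑ j, (x i * x j) * (b * κ (X i) (X j) - ∫ v, g i v * g j v ∂p) := by
      simp only [dotProduct, mulVec, Matrix.of_apply, star_trivial, Pi.star_apply]
      rw [Finset.mul_sum]
      refine Finset.sum_congr rfl fun i _ => ?_
      rw [Finset.mul_sum, Finset.mul_sum]
      refine Finset.sum_congr rfl fun j _ => ?_
      ring
    rw [hdot, ← expand]
    exact mul_nonneg (by positivity) key
end
end

section
/- Let v_1,…,v_s be i.i.d. random feature vectors and ψ a feature map satisfying Assumption 1 with constant b. For fixed points x_1,…,x_n with kernel matrix K and any y ∈ ℝⁿ, λ > 0, with K̃ = ΨΨᵀ the approximate kernel matrix, it holds that E_{V_s}[ ‖(K̃ − K)(K + nλ I_n)^{-1} y‖₂² ] ≤ (nb/s)·‖K^{1/2}(K + nλ I_n)^{-1} y‖₂². -/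
open MeasureTheory Matrix

noncomputable section

lemma integrable_of_ae_bound {V : Type*} [MeasurableSpace V] (p : Measure V) [IsFiniteMeasure p]
    {f : V → ℝ} (hf : Measurable f) {C : ℝ} (h : ∀ᵐ v ∂p, |f v| ≤ C) : Integrable f p :=
  (integrable_const C).mono' hf.aestronglyMeasurable (h.mono fun v hv => by simpa using hv)

lemma ae_pi_of_ae {s : ℕ} {V : Type*} [MeasurableSpace V] (p : Measure V) [SigmaFinite p]
    {Q : V → Prop} (h : ∀ᵐ v ∂p, Q v) :
    ∀ᵐ vs : Fin s → V ∂(Measure.pi fun _ => p), ∀ l, Q (vs l) := by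
  rw [ae_all_iff]
  intro l
  rw [ae_iff] at h ⊢
  exact Measure.pi_eval_preimage_null (μ := fun _ : Fin s => p) h

lemma iid_sum_sq {s : ℕ} {V : Type*} [MeasurableSpace V] (p : Measure V) [IsProbabilityMeasure p]
    (F : V → ℝ) (hF : Measurable F) (C : ℝ) (hC : ∀ᵐ v ∂p, |F v| ≤ C)
    (hmean : ∫ v, F v ∂p = 0) :
    ∫ vs : Fin s → V, (∑ l, F (vs l))^2 ∂(Measure.pi fun _ => p)
      = s * ∫ v, (F v)^2 ∂p := by
  letI : MeasureSpace V := ⟨p⟩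
  have hC0 : 0 ≤ C := le_trans (abs_nonneg _) hC.exists.choose_spec
  have hpiC : ∀ᵐ vs : Fin s → V ∂(Measure.pi fun _ => p), ∀ l, |F (vs l)| ≤ C :=
    ae_pi_of_ae p hC
  have hint : ∀ l l' : Fin s, Integrable (fun vs : Fin s → V => F (vs l) * F (vs l'))
      (Measure.pi fun _ => p) := by
    intro l l'
    refine integrable_of_ae_bound _ ((hF.comp (measurable_pi_apply l)).mul
      (hF.comp (measurable_pi_apply l'))) (C := C * C) (hpiC.mono fun vs hvs => ?_)
    rw [abs_mul]
    exact mul_le_mul (hvs l) (hvs l') (abs_nonneg _) hC0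
  have term : ∀ l l' : Fin s, (∫ vs : Fin s → V, F (vs l) * F (vs l') ∂(Measure.pi fun _ => p))
      = if l = l' then ∫ v, (F v)^2 ∂p else 0 := by
    intro l l'
    have hprod : ∀ vs : Fin s → V, F (vs l) * F (vs l')
        = ∏ i, ((if i = l then F (vs i) else 1) * (if i = l' then F (vs i) else 1)) := by
      intro vs
      rw [Finset.prod_mul_distrib, Finset.prod_ite_eq', Finset.prod_ite_eq']
      simp
    simp_rw [hprod]
    have := MeasureTheory.integral_fintype_prod_eq_prod (𝕜 := ℝ) (ι := Fin s)
      (f := fun i v => (if i = l then F v else 1) * (if i = l' then F v else 1))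
      (E := fun _ => V) (μ := fun _ => (volume : Measure V))
    rw [show (Measure.pi fun _ : Fin s => p) = (Measure.pi fun _ => (volume : Measure V)) from rfl, this]
    simp only [show (volume : Measure V) = p from rfl]
    by_cases h : l = l'
    · subst h
      simp only [if_pos]
      have hfac : ∀ i : Fin s, (∫ v : V, (if i = l then F v else 1) * (if i = l then F v else 1) ∂p)
          = if i = l then ∫ v, (F v)^2 ∂p else 1 := by
        intro i
        by_cases hi : i = l <;> simp [hi, sq, measure_univ]
      rw [Finset.prod_congr rfl fun i _ => hfac i, Finset.prod_ite_eq']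
      simp
    · simp only [if_neg h]
      have hfac : ∀ i : Fin s, (∫ v : V, (if i = l then F v else 1) * (if i = l' then F v else 1) ∂p)
          = if i = l then 0 else if i = l' then 0 else 1 := by
        intro i
        by_cases hi : i = l
        · subst hi
          simp only [if_pos rfl, if_neg h, mul_one]
          exact hmean
        · by_cases hi' : i = l'
          · subst hi'
            simp only [if_pos rfl, if_neg hi, one_mul]
            exact hmean
          · simp only [if_neg hi, if_neg hi', mul_one]
            simp [measure_univ]
      rw [Finset.prod_congr rfl fun i _ => hfac i]
      rw [Finset.prod_eq_zero (Finset.mem_univ l)]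
      simp
  calc ∫ vs : Fin s → V, (∑ l, F (vs l))^2 ∂(Measure.pi fun _ => p)
      = ∫ vs : Fin s → V, ∑ l, ∑ l', F (vs l) * F (vs l') ∂(Measure.pi fun _ => p) := by
        congr 1; funext vs; rw [sq, Finset.sum_mul_sum]
    _ = ∑ l, ∑ l', ∫ vs : Fin s → V, F (vs l) * F (vs l') ∂(Measure.pi fun _ => p) := by
        rw [integral_finset_sum _ fun l _ => integrable_finset_sum _ fun l' _ => hint l l']
        exact Finset.sum_congr rfl fun l _ => integral_finset_sum _ fun l' _ => hint l l'
    _ = ∑ l : Fin s, ∑ l' : Fin s, if l = l' then ∫ v, (F v)^2 ∂p else 0 := by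
        simp_rw [term]
    _ = s * ∫ v, (F v)^2 ∂p := by
        simp [Finset.sum_ite_eq]

lemma main_core {d n s : ℕ} (hs : 0 < s) {V : Type*} [MeasurableSpace V]
    (p : Measure V) [IsProbabilityMeasure p]
    (ψ : (Fin d → ℝ) → V → ℝ) (hm : ∀ x, Measurable (ψ x))
    (κ : (Fin d → ℝ) → (Fin d → ℝ) → ℝ) (b : ℝ) (hb : 0 < b)
    (hunbias : ∀ x x', ∫ v, ψ x v * ψ x' v ∂p = κ x x')
    (hbound : ∀ᵐ v ∂p, ∀ x, (ψ x v) ^ 2 ≤ b)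
    (X : Fin n → (Fin d → ℝ)) (z : Fin n → ℝ) :
    (∫ vs : Fin s → V,
        (((featMat ψ X vs * (featMat ψ X vs)ᵀ - kerMat κ X) *ᵥ z) ⬝ᵥ
          ((featMat ψ X vs * (featMat ψ X vs)ᵀ - kerMat κ X) *ᵥ z))
        ∂(Measure.pi fun _ : Fin s => p)) ≤
      (n : ℝ) * b / s * (z ⬝ᵥ (kerMat κ X *ᵥ z)) := by
  set B : ℝ := Real.sqrt b with hB
  have hB0 : 0 ≤ B := Real.sqrt_nonneg b
  set Z : ℝ := ∑ j, |z j| with hZ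
  have hZ0 : 0 ≤ Z := Finset.sum_nonneg fun j _ => abs_nonneg _
  set g : V → ℝ := fun v => ∑ j, ψ (X j) v * z j with hgdef
  set f : Fin n → V → ℝ := fun i v => ψ (X i) v * g v with hfdef
  set μf : Fin n → ℝ := fun i => ∑ j, κ (X i) (X j) * z j with hμdef
  set G : Fin n → V → ℝ := fun i v => f i v - μf i with hGdef
  have hgm : Measurable g := Finset.measurable_sum _ fun j _ => (hm (X j)).mul_const _
  have hfm : ∀ i, Measurable (f i) := fun i => (hm (X i)).mul hgm
  have hGm : ∀ i, Measurable (G i) := fun i => (hfm i).sub measurable_const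
  have habs : ∀ᵐ v ∂p, ∀ x, |ψ x v| ≤ B := hbound.mono fun v hv x => by
    rw [← Real.sqrt_sq_eq_abs]; exact Real.sqrt_le_sqrt (hv x)
  have hgb : ∀ᵐ v ∂p, |g v| ≤ B * Z := habs.mono fun v hv => by
    calc |g v| ≤ ∑ j, |ψ (X j) v * z j| := Finset.abs_sum_le_sum_abs _ _
      _ ≤ ∑ j, B * |z j| := Finset.sum_le_sum fun j _ => by
          rw [abs_mul]; exact mul_le_mul_of_nonneg_right (hv (X j)) (abs_nonneg _)
      _ = B * Z := by rw [← Finset.mul_sum]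
  have hfb : ∀ᵐ v ∂p, ∀ i, |f i v| ≤ B * (B * Z) := (habs.and hgb).mono fun v hv i => by
    rw [abs_mul]
    exact mul_le_mul (hv.1 (X i)) hv.2 (abs_nonneg _) hB0
  have hppint : ∀ x x', Integrable (fun v => ψ x v * ψ x' v) p := fun x x' =>
    integrable_of_ae_bound _ ((hm x).mul (hm x')) (C := B * B) (habs.mono fun v hv => by
      rw [abs_mul]; exact mul_le_mul (hv x) (hv x') (abs_nonneg _) hB0)
  have hfint : ∀ i, Integrable (f i) p := fun i =>
    integrable_of_ae_bound _ (hfm i) (hfb.mono fun v hv => hv i)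
  have hf2int : ∀ i, Integrable (fun v => (f i v)^2) p := fun i =>
    integrable_of_ae_bound _ ((hfm i).pow_const 2) (C := (B * (B * Z))^2)
      (hfb.mono fun v hv => by
        rw [abs_pow]
        exact pow_le_pow_left₀ (abs_nonneg _) (hv i) 2)
  have hg2int : Integrable (fun v => (g v)^2) p :=
    integrable_of_ae_bound _ (hgm.pow_const 2) (C := (B * Z)^2)
      (hgb.mono fun v hv => by
        rw [abs_pow]
        exact pow_le_pow_left₀ (abs_nonneg _) hv 2)
  -- mean of f i
  have hmean : ∀ i, ∫ v, f i v ∂p = μf i := by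
    intro i
    have hpt : ∀ v, f i v = ∑ j, (ψ (X i) v * ψ (X j) v) * z j := by
      intro v
      simp only [hfdef, hgdef, Finset.mul_sum]
      exact Finset.sum_congr rfl fun j _ => by ring
    simp_rw [hpt]
    rw [integral_finset_sum _ fun j _ => (hppint (X i) (X j)).mul_const _]
    exact Finset.sum_congr rfl fun j _ => by rw [integral_mul_const, hunbias]
  have hG0 : ∀ i, ∫ v, G i v ∂p = 0 := by
    intro i
    simp only [hGdef]
    rw [integral_sub (hfint i) (integrable_const _), hmean i, integral_const, probReal_univ]
    simp
  -- pointwise identity for the matrix-vector expression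
  have hss : ((Real.sqrt s)⁻¹ * (Real.sqrt s)⁻¹ : ℝ) = (s : ℝ)⁻¹ := by
    rw [← mul_inv, Real.mul_self_sqrt (Nat.cast_nonneg s)]
  have hpt : ∀ (vs : Fin s → V) (i : Fin n),
      ((featMat ψ X vs * (featMat ψ X vs)ᵀ - kerMat κ X) *ᵥ z) i
        = (s : ℝ)⁻¹ * ∑ l, G i (vs l) := by
    intro vs i
    have h1 : ((featMat ψ X vs * (featMat ψ X vs)ᵀ) *ᵥ z) i = (s : ℝ)⁻¹ * ∑ l, f i (vs l) := by
      simp only [Matrix.mulVec, dotProduct, Matrix.mul_apply, Matrix.transpose_apply,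
        featMat, Matrix.of_apply]
      calc ∑ j, (∑ l, ((Real.sqrt s)⁻¹ * ψ (X i) (vs l)) * ((Real.sqrt s)⁻¹ * ψ (X j) (vs l))) * z j
          = ∑ j, ∑ l, (s : ℝ)⁻¹ * (ψ (X i) (vs l) * (ψ (X j) (vs l) * z j)) := by
            refine Finset.sum_congr rfl fun j _ => ?_
            rw [Finset.sum_mul]
            refine Finset.sum_congr rfl fun l _ => ?_
            rw [← hss]; ring
        _ = ∑ l, ∑ j, (s : ℝ)⁻¹ * (ψ (X i) (vs l) * (ψ (X j) (vs l) * z j)) := Finset.sum_comm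
        _ = (s : ℝ)⁻¹ * ∑ l, f i (vs l) := by
            rw [Finset.mul_sum]
            refine Finset.sum_congr rfl fun l _ => ?_
            simp only [hfdef, hgdef, Finset.mul_sum]
    have h2 : (kerMat κ X *ᵥ z) i = μf i := by
      simp only [Matrix.mulVec, dotProduct, kerMat, Matrix.of_apply, hμdef]
    rw [Matrix.sub_mulVec, Pi.sub_apply, h1, h2]
    have : ∑ l, G i (vs l) = (∑ l, f i (vs l)) - s * μf i := by
      simp only [hGdef, Finset.sum_sub_distrib, Finset.sum_const, Finset.card_univ,
        Fintype.card_fin, nsmul_eq_mul]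
    rw [this, mul_sub, ← mul_assoc, inv_mul_cancel₀ (by exact_mod_cast hs.ne' : (s:ℝ) ≠ 0), one_mul]
  -- integrand rewrite
  have hintegrand : ∀ vs : Fin s → V,
      (((featMat ψ X vs * (featMat ψ X vs)ᵀ - kerMat κ X) *ᵥ z) ⬝ᵥ
        ((featMat ψ X vs * (featMat ψ X vs)ᵀ - kerMat κ X) *ᵥ z))
      = ((s : ℝ)⁻¹)^2 * ∑ i, (∑ l, G i (vs l))^2 := by
    intro vs
    simp only [dotProduct, hpt vs]
    rw [Finset.mul_sum]
    exact Finset.sum_congr rfl fun i _ => by ring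
  -- bounds for G
  have hGb : ∀ᵐ v ∂p, ∀ i, |G i v| ≤ B * (B * Z) + |μf i| := hfb.mono fun v hv i => by
    simp only [hGdef]
    rw [sub_eq_add_neg]
    exact (abs_add_le _ _).trans (by rw [abs_neg]; exact add_le_add_left (hv i) _)
  -- integrability on pi measure
  have hGsqint : ∀ i, Integrable (fun vs : Fin s → V => (∑ l, G i (vs l))^2)
      (Measure.pi fun _ => p) := by
    intro i
    have hmeas : Measurable fun vs : Fin s → V => (∑ l, G i (vs l))^2 :=
      (Finset.measurable_sum _ fun l _ => (hGm i).comp (measurable_pi_apply l)).pow_const 2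
    refine integrable_of_ae_bound _ hmeas (C := ((s : ℝ) * (B * (B * Z) + |μf i|))^2)
      ((ae_pi_of_ae p hGb).mono fun vs hvs => ?_)
    rw [abs_pow]
    refine pow_le_pow_left₀ (abs_nonneg _) ?_ 2
    calc |∑ l, G i (vs l)| ≤ ∑ l, |G i (vs l)| := Finset.abs_sum_le_sum_abs _ _
      _ ≤ ∑ _l : Fin s, (B * (B * Z) + |μf i|) := Finset.sum_le_sum fun l _ => hvs l i
      _ = (s : ℝ) * (B * (B * Z) + |μf i|) := by
          simp [Finset.sum_const, nsmul_eq_mul, mul_add]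
  have hsne : ((s : ℝ)) ≠ 0 := by exact_mod_cast hs.ne'
  -- value of the LHS
  have hL : (∫ vs : Fin s → V,
      (((featMat ψ X vs * (featMat ψ X vs)ᵀ - kerMat κ X) *ᵥ z) ⬝ᵥ
        ((featMat ψ X vs * (featMat ψ X vs)ᵀ - kerMat κ X) *ᵥ z))
      ∂(Measure.pi fun _ : Fin s => p)) = (s : ℝ)⁻¹ * ∑ i, ∫ v, (G i v)^2 ∂p := by
    simp_rw [hintegrand]
    rw [integral_const_mul, integral_finset_sum _ fun i _ => hGsqint i]
    rw [Finset.sum_congr rfl fun i _ =>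
      iid_sum_sq p (G i) (hGm i) _ (hGb.mono fun v hv => hv i) (hG0 i)]
    rw [← Finset.mul_sum, ← mul_assoc]
    congr 1
    rw [sq, mul_assoc, inv_mul_cancel₀ hsne, mul_one]
  -- variance ≤ second moment
  have hGle : ∀ i, ∫ v, (G i v)^2 ∂p ≤ ∫ v, (f i v)^2 ∂p := by
    intro i
    have hexp : ∀ v, (G i v)^2 = ((f i v)^2 - (2 * μf i) * f i v) + (μf i)^2 := fun v => by
      simp only [hGdef]; ring
    have hint0 : Integrable (fun v => (2 * μf i) * f i v) p := (hfint i).const_mul _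
    have hint1 : Integrable (fun v => (f i v)^2 - (2 * μf i) * f i v) p := (hf2int i).sub hint0
    have h1 : ∫ v, (G i v)^2 ∂p
        = (∫ v, (f i v)^2 ∂p - (2 * μf i) * (μf i)) + (μf i)^2 := by
      simp_rw [hexp]
      rw [integral_add hint1 (integrable_const _),
        integral_sub (hf2int i) hint0, integral_const_mul, hmean i,
        integral_const, probReal_univ]
      simp
    rw [h1]
    nlinarith [sq_nonneg (μf i)]
  -- second moment sum bound
  have hsum : ∑ i, ∫ v, (f i v)^2 ∂p ≤ ((n : ℝ) * b) * ∫ v, (g v)^2 ∂p := by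
    rw [← integral_finset_sum _ fun i _ => hf2int i, ← integral_const_mul]
    refine integral_mono_ae (integrable_finset_sum _ fun i _ => hf2int i)
      (hg2int.const_mul _) (hbound.mono fun v hv => ?_)
    calc ∑ i, (f i v)^2 = (∑ i, (ψ (X i) v)^2) * (g v)^2 := by
          rw [Finset.sum_mul]
          exact Finset.sum_congr rfl fun i _ => by simp only [hfdef]; ring
      _ ≤ ((n : ℝ) * b) * (g v)^2 := by
          refine mul_le_mul_of_nonneg_right ?_ (sq_nonneg _)
          calc ∑ i : Fin n, (ψ (X i) v)^2 ≤ ∑ _i : Fin n, b :=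
                Finset.sum_le_sum fun i _ => hv (X i)
            _ = (n : ℝ) * b := by simp [Finset.sum_const, nsmul_eq_mul]
  -- second moment of g
  have hgK : ∫ v, (g v)^2 ∂p = z ⬝ᵥ (kerMat κ X *ᵥ z) := by
    have hexp : ∀ v, (g v)^2 = ∑ j, ∑ k, (ψ (X j) v * ψ (X k) v) * (z j * z k) := by
      intro v
      simp only [hgdef]
      rw [sq, Finset.sum_mul_sum]
      exact Finset.sum_congr rfl fun j _ => Finset.sum_congr rfl fun k _ => by ring
    simp_rw [hexp]
    rw [integral_finset_sum _ fun j _ =>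
      integrable_finset_sum _ fun k _ => (hppint _ _).mul_const _]
    have hinner : ∀ j, ∫ v, ∑ k, (ψ (X j) v * ψ (X k) v) * (z j * z k) ∂p
        = ∑ k, κ (X j) (X k) * (z j * z k) := by
      intro j
      rw [integral_finset_sum _ fun k _ => (hppint _ _).mul_const _]
      exact Finset.sum_congr rfl fun k _ => by rw [integral_mul_const, hunbias]
    rw [Finset.sum_congr rfl fun j _ => hinner j]
    simp only [dotProduct, Matrix.mulVec, kerMat, Matrix.of_apply, Finset.mul_sum]
    exact Finset.sum_congr rfl fun j _ => Finset.sum_congr rfl fun k _ => by ring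
  have hsinv0 : (0 : ℝ) ≤ (s : ℝ)⁻¹ := by positivity
  calc (∫ vs : Fin s → V,
      (((featMat ψ X vs * (featMat ψ X vs)ᵀ - kerMat κ X) *ᵥ z) ⬝ᵥ
        ((featMat ψ X vs * (featMat ψ X vs)ᵀ - kerMat κ X) *ᵥ z))
      ∂(Measure.pi fun _ : Fin s => p))
      = (s : ℝ)⁻¹ * ∑ i, ∫ v, (G i v)^2 ∂p := hL
    _ ≤ (s : ℝ)⁻¹ * ∑ i, ∫ v, (f i v)^2 ∂p :=
        mul_le_mul_of_nonneg_left (Finset.sum_le_sum fun i _ => hGle i) hsinv0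
    _ ≤ (s : ℝ)⁻¹ * (((n : ℝ) * b) * ∫ v, (g v)^2 ∂p) :=
        mul_le_mul_of_nonneg_left hsum hsinv0
    _ = (n : ℝ) * b / s * (z ⬝ᵥ (kerMat κ X *ᵥ z)) := by rw [hgK]; ring

/-- E_{V_s}[‖(K̃ − K)(K + nλI)⁻¹y‖₂²] ≤ (nb/s)·‖K^{1/2}(K + nλI)⁻¹y‖₂²,
with K̃ = ΨΨᵀ, where ‖K^{1/2}z‖₂² is written as zᵀKz (K is symmetric PSD). -/
theorem expected_ktilde_error_bound
    {d n s : ℕ} (hs : 0 < s) {V : Type*} [MeasurableSpace V]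
    (p : Measure V) [IsProbabilityMeasure p]
    (ψ : (Fin d → ℝ) → V → ℝ) (hm : ∀ x, Measurable (ψ x))
    (κ : (Fin d → ℝ) → (Fin d → ℝ) → ℝ)
    (b : ℝ) (hb : 0 < b)
    (hunbias : ∀ x x', ∫ v, ψ x v * ψ x' v ∂p = κ x x')
    (hbound : ∀ᵐ v ∂p, ∀ x, (ψ x v) ^ 2 ≤ b)
    (X : Fin n → (Fin d → ℝ)) (y : Fin n → ℝ) (lam : ℝ) (hlam : 0 < lam) :
    (∫ vs : Fin s → V,
        (((featMat ψ X vs * (featMat ψ X vs)ᵀ - kerMat κ X) *ᵥ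
            ((kerMat κ X + ((n : ℝ) * lam) • (1 : Matrix (Fin n) (Fin n) ℝ))⁻¹ *ᵥ y)) ⬝ᵥ
          ((featMat ψ X vs * (featMat ψ X vs)ᵀ - kerMat κ X) *ᵥ
            ((kerMat κ X + ((n : ℝ) * lam) • (1 : Matrix (Fin n) (Fin n) ℝ))⁻¹ *ᵥ y)))
        ∂(Measure.pi fun _ : Fin s => p)) ≤
      (n : ℝ) * b / s *
        ((((kerMat κ X + ((n : ℝ) * lam) • (1 : Matrix (Fin n) (Fin n) ℝ))⁻¹ *ᵥ y) ⬝ᵥ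
          (kerMat κ X *ᵥ
            ((kerMat κ X + ((n : ℝ) * lam) • (1 : Matrix (Fin n) (Fin n) ℝ))⁻¹ *ᵥ y)))) :=
  main_core hs p ψ hm κ b hb hunbias hbound X
    ((kerMat κ X + ((n : ℝ) * lam) • (1 : Matrix (Fin n) (Fin n) ℝ))⁻¹ *ᵥ y)
end
end

section
/- Let v_1,…,v_s be i.i.d. random feature vectors and ψ a feature map satisfying Assumption 1 with constant b. For fixed points x_1,…,x_n, a fixed test point x', any y ∈ ℝⁿ and λ > 0, with k'_i = κ(x_i,x') and k̃' = Ψ ψ(x'; V_s), it holds that E_{V_s}[ ( (k̃' − k')ᵀ (K + nλ I_n)^{-1} y )² ] ≤ (b/s)·‖K^{1/2}(K + nλ I_n)^{-1} y‖₂². -/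
open MeasureTheory Matrix

noncomputable section

lemma int_of_bdd {V : Type*} [MeasurableSpace V] {p : Measure V} [IsFiniteMeasure p]
    {f : V → ℝ} (hf : Measurable f) {C : ℝ} (h : ∀ᵐ v ∂p, |f v| ≤ C) :
    Integrable f p :=
  (integrable_const C).mono' hf.aestronglyMeasurable (by simpa [Real.norm_eq_abs] using h)

lemma second_moment {V : Type*} [MeasureSpace V] [IsProbabilityMeasure (volume : Measure V)]
    (s : ℕ) (F : V → ℝ) (hFm : Measurable F) (C : ℝ) (hC : ∀ᵐ v, |F v| ≤ C)
    (hmean : ∫ v, F v = 0) :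
    ∫ vs : Fin s → V, (∑ l, F (vs l)) ^ 2 = s * ∫ v, (F v) ^ 2 := by
  have key : ∀ l m : Fin s, (∫ vs : Fin s → V, F (vs l) * F (vs m))
      = if l = m then ∫ v, (F v) ^ 2 else 0 := by
    intro l m
    by_cases hlm : l = m
    · subst hlm
      simp only [if_pos rfl]
      have h1 : ∀ vs : Fin s → V, F (vs l) * F (vs l)
          = ∏ k, (if l = k then F (vs k) ^ 2 else 1) := by
        intro vs
        rw [Finset.prod_ite_eq]
        simp [sq]
      simp_rw [h1]
      rw [integral_fintype_prod_volume_eq_prod (f := fun k v => if l = k then F v ^ 2 else 1)]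
      have h2 : ∀ k : Fin s, (∫ v, if l = k then F v ^ 2 else 1)
          = if l = k then ∫ v, F v ^ 2 else 1 := by
        intro k; split_ifs <;> simp
      simp_rw [h2]
      rw [Finset.prod_ite_eq]
      simp
    · simp only [if_neg hlm]
      have h1 : ∀ vs : Fin s → V, F (vs l) * F (vs m)
          = ∏ k, ((if l = k then F (vs k) else 1) * (if m = k then F (vs k) else 1)) := by
        intro vs
        rw [Finset.prod_mul_distrib, Finset.prod_ite_eq, Finset.prod_ite_eq]
        simp
      simp_rw [h1]
      rw [integral_fintype_prod_volume_eq_prod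
        (f := fun k v => (if l = k then F v else 1) * (if m = k then F v else 1))]
      apply Finset.prod_eq_zero (Finset.mem_univ l)
      simp only [if_pos rfl, if_neg (Ne.symm hlm), mul_one]
      exact hmean
  have hint : ∀ l m : Fin s,
      Integrable (fun vs : Fin s → V => F (vs l) * F (vs m)) volume := by
    intro l m
    apply int_of_bdd ((hFm.comp (measurable_pi_apply l)).mul (hFm.comp (measurable_pi_apply m)))
      (C := C * C)
    have hvol : (volume : Measure (Fin s → V)) = Measure.pi fun _ => volume := volume_pi
    rw [hvol]
    have hl := (Measure.tendsto_eval_ae_ae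
      (μ := fun _ : Fin s => (volume : Measure V)) (i := l)).eventually hC
    have hm' := (Measure.tendsto_eval_ae_ae
      (μ := fun _ : Fin s => (volume : Measure V)) (i := m)).eventually hC
    filter_upwards [hl, hm'] with vs h1 h2
    have h0 : (0:ℝ) ≤ C := le_trans (abs_nonneg _) h2
    calc |F (vs l) * F (vs m)| = |F (vs l)| * |F (vs m)| := abs_mul _ _
      _ ≤ C * C := mul_le_mul h1 h2 (abs_nonneg _) h0
  have expand : ∀ vs : Fin s → V, (∑ l, F (vs l)) ^ 2
      = ∑ q : Fin s × Fin s, F (vs q.1) * F (vs q.2) := by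
    intro vs
    rw [sq, Finset.sum_mul_sum, ← Finset.sum_product']
    rfl
  simp_rw [expand]
  rw [integral_finset_sum _ (fun q _ => hint q.1 q.2)]
  have : ∀ q : Fin s × Fin s, (∫ vs : Fin s → V, F (vs q.1) * F (vs q.2))
      = if q.1 = q.2 then ∫ v, (F v) ^ 2 else 0 := fun q => key q.1 q.2
  simp_rw [this]
  rw [Fintype.sum_prod_type]
  simp [Finset.sum_ite_eq, Finset.mul_sum, mul_comm]

/-- E_{V_s}[((k̃' − k')ᵀ(K + nλI)⁻¹y)²] ≤ (b/s)·‖K^{1/2}(K + nλI)⁻¹y‖₂²,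
where ‖K^{1/2}z‖₂² is written as zᵀKz (K is symmetric PSD). -/
theorem expected_ker_vec_error_bound
    {d n s : ℕ} (hs : 0 < s) {V : Type*} [MeasurableSpace V]
    (p : Measure V) [IsProbabilityMeasure p]
    (ψ : (Fin d → ℝ) → V → ℝ) (hm : ∀ x, Measurable (ψ x))
    (κ : (Fin d → ℝ) → (Fin d → ℝ) → ℝ)
    (b : ℝ) (hb : 0 < b)
    (hunbias : ∀ x x', ∫ v, ψ x v * ψ x' v ∂p = κ x x')
    (hbound : ∀ᵐ v ∂p, ∀ x, (ψ x v) ^ 2 ≤ b)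
    (X : Fin n → (Fin d → ℝ)) (x' : Fin d → ℝ)
    (y : Fin n → ℝ) (lam : ℝ) (hlam : 0 < lam) :
    (∫ vs : Fin s → V,
        ((approxKerVec ψ X x' vs - fun i => κ (X i) x') ⬝ᵥ
          ((kerMat κ X + ((n : ℝ) * lam) • (1 : Matrix (Fin n) (Fin n) ℝ))⁻¹ *ᵥ y)) ^ 2
        ∂(Measure.pi fun _ : Fin s => p)) ≤
      b / s *
        ((((kerMat κ X + ((n : ℝ) * lam) • (1 : Matrix (Fin n) (Fin n) ℝ))⁻¹ *ᵥ y) ⬝ᵥ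
          (kerMat κ X *ᵥ
            ((kerMat κ X + ((n : ℝ) * lam) • (1 : Matrix (Fin n) (Fin n) ℝ))⁻¹ *ᵥ y)))) := by
  letI : MeasureSpace V := ⟨p⟩
  set z := ((kerMat κ X + ((n : ℝ) * lam) • (1 : Matrix (Fin n) (Fin n) ℝ))⁻¹ *ᵥ y) with hz
  -- basic bounds
  have hψabs : ∀ᵐ v ∂p, ∀ x, |ψ x v| ≤ Real.sqrt b := by
    filter_upwards [hbound] with v hv x
    have := Real.sqrt_le_sqrt (hv x)
    rwa [Real.sqrt_sq_eq_abs] at this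
  have hprod : ∀ᵐ v ∂p, ∀ x x'', |ψ x v * ψ x'' v| ≤ b := by
    filter_upwards [hψabs] with v hv x x''
    calc |ψ x v * ψ x'' v| = |ψ x v| * |ψ x'' v| := abs_mul _ _
      _ ≤ Real.sqrt b * Real.sqrt b :=
        mul_le_mul (hv x) (hv x'') (abs_nonneg _) (Real.sqrt_nonneg b)
      _ = b := Real.mul_self_sqrt hb.le
  have hIntψψ : ∀ x x'', Integrable (fun v => ψ x v * ψ x'' v) p := by
    intro x x''
    exact int_of_bdd ((hm x).mul (hm x'')) (C := b)
      (by filter_upwards [hprod] with v hv using hv x x'')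
  have hκb : ∀ x x'', |κ x x''| ≤ b := by
    intro x x''
    rw [← hunbias x x'']
    have := norm_integral_le_of_norm_le_const
      (μ := p) (C := b) (f := fun v => ψ x v * ψ x'' v)
      (by filter_upwards [hprod] with v hv
          rw [Real.norm_eq_abs]
          exact hv x x'')
    rwa [Real.norm_eq_abs, probReal_univ, mul_one] at this
  -- the centered one-sample function
  set F : V → ℝ := fun v => ∑ i, z i * (ψ (X i) v * ψ x' v - κ (X i) x') with hF
  have hFm : Measurable F := by
    apply Finset.measurable_sum
    intro i _
    exact ((((hm (X i)).mul (hm x')).sub measurable_const)).const_mul (z i)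
  have hFbd : ∀ᵐ v ∂p, |F v| ≤ (∑ i, |z i|) * (2 * b) := by
    filter_upwards [hprod] with v hv
    calc |F v| ≤ ∑ i, |z i * (ψ (X i) v * ψ x' v - κ (X i) x')| :=
          Finset.abs_sum_le_sum_abs _ _
      _ ≤ ∑ i, |z i| * (2 * b) := by
          apply Finset.sum_le_sum
          intro i _
          rw [abs_mul]
          apply mul_le_mul_of_nonneg_left _ (abs_nonneg _)
          calc |ψ (X i) v * ψ x' v - κ (X i) x'|
              ≤ |ψ (X i) v * ψ x' v| + |κ (X i) x'| := abs_sub _ _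
            _ ≤ b + b := add_le_add (hv _ _) (hκb _ _)
            _ = 2 * b := by ring
      _ = (∑ i, |z i|) * (2 * b) := by rw [Finset.sum_mul]
  have hIntF_terms : ∀ i : Fin n,
      Integrable (fun v => z i * (ψ (X i) v * ψ x' v - κ (X i) x')) p :=
    fun i => (((hIntψψ (X i) x').sub (integrable_const _)).const_mul (z i))
  have hmean : ∫ v, F v ∂p = 0 := by
    rw [hF]
    rw [integral_finset_sum _ (fun i _ => hIntF_terms i)]
    apply Finset.sum_eq_zero
    intro i _
    rw [integral_const_mul, integral_sub (hIntψψ (X i) x') (integrable_const _),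
      hunbias (X i) x']
    simp
  -- pointwise rewriting of the integrand
  have hs' : (s : ℝ) ≠ 0 := Nat.cast_ne_zero.mpr hs.ne'
  have hsqrt : (Real.sqrt s)⁻¹ * (Real.sqrt s)⁻¹ = (s : ℝ)⁻¹ := by
    rw [← mul_inv, Real.mul_self_sqrt (Nat.cast_nonneg s)]
  have hrepr : ∀ vs : Fin s → V,
      ((approxKerVec ψ X x' vs - fun i => κ (X i) x') ⬝ᵥ z)
        = (s : ℝ)⁻¹ * ∑ l, F (vs l) := by
    intro vs
    simp only [hF, approxKerVec, featMat, featVec, dotProduct, mulVec, Pi.sub_apply,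
      Matrix.of_apply]
    simp_rw [Finset.mul_sum]
    rw [Finset.sum_comm]
    refine Finset.sum_congr rfl fun i _ => ?_
    have hterm : ∀ l : Fin s, (Real.sqrt s)⁻¹ * ψ (X i) (vs l) * ((Real.sqrt s)⁻¹ * ψ x' (vs l))
        = (s : ℝ)⁻¹ * (ψ (X i) (vs l) * ψ x' (vs l)) := by
      intro l; rw [← hsqrt]; ring
    simp_rw [hterm]
    have hterm2 : ∀ l : Fin s, (s : ℝ)⁻¹ * (z i * (ψ (X i) (vs l) * ψ x' (vs l) - κ (X i) x'))
        = (s : ℝ)⁻¹ * (ψ (X i) (vs l) * ψ x' (vs l)) * z i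
          - (s : ℝ)⁻¹ * (z i * κ (X i) x') := by
      intro l; ring
    simp_rw [hterm2]
    rw [Finset.sum_sub_distrib, Finset.sum_const, Finset.card_univ, Fintype.card_fin,
      nsmul_eq_mul, ← mul_assoc, mul_inv_cancel₀ hs', one_mul, sub_mul, ← Finset.sum_mul]
    ring
  -- apply the second moment identity
  haveI : IsProbabilityMeasure (volume : Measure V) := by
    show IsProbabilityMeasure p; infer_instance
  have hpi : (Measure.pi fun _ : Fin s => p) = (volume : Measure (Fin s → V)) :=
    volume_pi.symm
  have hsm := second_moment (V := V) s F hFm _ hFbd hmean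
  have step1 : (∫ vs : Fin s → V,
        ((approxKerVec ψ X x' vs - fun i => κ (X i) x') ⬝ᵥ z) ^ 2
        ∂(Measure.pi fun _ : Fin s => p))
      = (s : ℝ)⁻¹ * ∫ v, (F v) ^ 2 ∂p := by
    rw [hpi]
    have : ∀ vs : Fin s → V,
        ((approxKerVec ψ X x' vs - fun i => κ (X i) x') ⬝ᵥ z) ^ 2
        = ((s : ℝ)⁻¹) ^ 2 * (∑ l, F (vs l)) ^ 2 := by
      intro vs; rw [hrepr vs, mul_pow]
    simp_rw [this]
    rw [integral_const_mul, hsm]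
    have : (∫ v, (F v) ^ 2 ∂(volume : Measure V)) = ∫ v, (F v) ^ 2 ∂p := rfl
    rw [this]
    field_simp
  rw [step1]
  -- now bound ∫ F² by b * (z ⬝ K z)
  set c : ℝ := ∑ i, z i * κ (X i) x' with hc
  set u : V → ℝ := fun v => ∑ i, z i * ψ (X i) v with hu
  have hum : Measurable u :=
    Finset.measurable_sum _ fun i _ => (hm (X i)).const_mul (z i)
  have hubd : ∀ᵐ v ∂p, |u v| ≤ (∑ i, |z i|) * Real.sqrt b := by
    filter_upwards [hψabs] with v hv
    calc |u v| ≤ ∑ i, |z i * ψ (X i) v| := Finset.abs_sum_le_sum_abs _ _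
      _ ≤ ∑ i, |z i| * Real.sqrt b := by
          apply Finset.sum_le_sum
          intro i _
          rw [abs_mul]
          exact mul_le_mul_of_nonneg_left (hv _) (abs_nonneg _)
      _ = (∑ i, |z i|) * Real.sqrt b := by rw [Finset.sum_mul]
  have hFuw : ∀ v, F v = u v * ψ x' v - c := by
    intro v
    rw [hF, hc, hu, Finset.sum_mul, ← Finset.sum_sub_distrib]
    refine Finset.sum_congr rfl fun i _ => ?_; ring
  have huwint : Integrable (fun v => u v * ψ x' v) p := by
    apply int_of_bdd (hum.mul (hm x')) (C := (∑ i, |z i|) * Real.sqrt b * Real.sqrt b)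
    filter_upwards [hubd, hψabs] with v h1 h2
    rw [Pi.mul_apply, abs_mul]
    exact mul_le_mul h1 (h2 x') (abs_nonneg _)
      (mul_nonneg (Finset.sum_nonneg fun i _ => abs_nonneg _) (Real.sqrt_nonneg b))
  have huw_mean : ∫ v, u v * ψ x' v ∂p = c := by
    rw [hu, hc]
    have : ∀ v : V, (∑ i, z i * ψ (X i) v) * ψ x' v
        = ∑ i, z i * (ψ (X i) v * ψ x' v) := by
      intro v; rw [Finset.sum_mul]; exact Finset.sum_congr rfl fun i _ => by ring
    simp_rw [this]
    rw [integral_finset_sum _ (fun i _ => (hIntψψ (X i) x').const_mul (z i))]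
    refine Finset.sum_congr rfl fun i _ => ?_
    rw [integral_const_mul, hunbias]
  have huw2int : Integrable (fun v => (u v * ψ x' v) ^ 2) p := by
    apply int_of_bdd ((hum.mul (hm x')).pow_const 2)
      (C := ((∑ i, |z i|) * Real.sqrt b * Real.sqrt b) ^ 2)
    filter_upwards [hubd, hψabs] with v h1 h2
    rw [abs_pow]
    apply pow_le_pow_left₀ (abs_nonneg _)
    rw [Pi.mul_apply, abs_mul]
    exact mul_le_mul h1 (h2 x') (abs_nonneg _)
      (mul_nonneg (Finset.sum_nonneg fun i _ => abs_nonneg _) (Real.sqrt_nonneg b))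
  have hu2int : Integrable (fun v => (u v) ^ 2) p := by
    apply int_of_bdd (hum.pow_const 2) (C := ((∑ i, |z i|) * Real.sqrt b) ^ 2)
    filter_upwards [hubd] with v h1
    rw [abs_pow]
    exact pow_le_pow_left₀ (abs_nonneg _) h1 2
  have hF2 : ∫ v, (F v) ^ 2 ∂p ≤ ∫ v, (u v * ψ x' v) ^ 2 ∂p := by
    have expand : ∀ v, (F v) ^ 2
        = (u v * ψ x' v) ^ 2 - 2 * c * (u v * ψ x' v) + c ^ 2 := by
      intro v; rw [hFuw v]; ring
    have hint2 : Integrable (fun v => 2 * c * (u v * ψ x' v)) p := huwint.const_mul _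
    have hint1 : Integrable
        (fun v => (u v * ψ x' v) ^ 2 - 2 * c * (u v * ψ x' v)) p := huw2int.sub hint2
    simp_rw [expand]
    rw [integral_add hint1 (integrable_const _),
      integral_sub huw2int hint2, integral_const_mul, huw_mean]
    simp only [integral_const, probReal_univ, smul_eq_mul, one_mul]
    nlinarith [sq_nonneg c]
  have hF2b : ∫ v, (u v * ψ x' v) ^ 2 ∂p ≤ b * ∫ v, (u v) ^ 2 ∂p := by
    rw [← integral_const_mul]
    apply integral_mono_ae huw2int (hu2int.const_mul b)
    filter_upwards [hbound] with v hv
    calc (u v * ψ x' v) ^ 2 = (ψ x' v) ^ 2 * (u v) ^ 2 := by ring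
      _ ≤ b * (u v) ^ 2 := mul_le_mul_of_nonneg_right (hv x') (sq_nonneg _)
  have hu2 : ∫ v, (u v) ^ 2 ∂p = z ⬝ᵥ (kerMat κ X *ᵥ z) := by
    have expand : ∀ v, (u v) ^ 2 = ∑ i, ∑ j, z i * z j * (ψ (X i) v * ψ (X j) v) := by
      intro v
      rw [hu, sq, Finset.sum_mul_sum]
      refine Finset.sum_congr rfl fun i _ => ?_
      refine Finset.sum_congr rfl fun j _ => ?_
      ring
    simp_rw [expand]
    rw [integral_finset_sum _ (fun i _ => integrable_finset_sum _
      (fun j _ => ((hIntψψ (X i) (X j)).const_mul _)))]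
    have hinner : ∀ i : Fin n, (∫ v, ∑ j, z i * z j * (ψ (X i) v * ψ (X j) v) ∂p)
        = ∑ j, z i * z j * κ (X i) (X j) := by
      intro i
      rw [integral_finset_sum _ (fun j _ => ((hIntψψ (X i) (X j)).const_mul _))]
      refine Finset.sum_congr rfl fun j _ => ?_
      rw [integral_const_mul, hunbias]
    simp_rw [hinner]
    simp only [dotProduct, mulVec, kerMat, Matrix.of_apply]
    refine Finset.sum_congr rfl fun i _ => ?_
    rw [Finset.mul_sum]
    refine Finset.sum_congr rfl fun j _ => ?_
    ring
  have hfinal : ∫ v, (F v) ^ 2 ∂p ≤ b * (z ⬝ᵥ (kerMat κ X *ᵥ z)) := by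
    calc ∫ v, (F v) ^ 2 ∂p ≤ ∫ v, (u v * ψ x' v) ^ 2 ∂p := hF2
      _ ≤ b * ∫ v, (u v) ^ 2 ∂p := hF2b
      _ = b * (z ⬝ᵥ (kerMat κ X *ᵥ z)) := by rw [hu2]
  have h2 : (s : ℝ)⁻¹ * ∫ v, (F v) ^ 2 ∂p
      ≤ (s : ℝ)⁻¹ * (b * (z ⬝ᵥ (kerMat κ X *ᵥ z))) :=
    mul_le_mul_of_nonneg_left hfinal (inv_nonneg.mpr (Nat.cast_nonneg s))
  refine le_trans h2 (le_of_eq ?_)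
  rw [div_eq_mul_inv]; ring
end
end

section
/- Let K, K̃ ∈ ℝ^{n×n} be symmetric positive semidefinite, k', k̃', y ∈ ℝⁿ, and λ > 0. Then ( k̃'ᵀ(K̃ + nλI_n)^{-1}y − k'ᵀ(K + nλI_n)^{-1}y )² ≤ 2·‖(K̃ + nλI_n)^{-1}k̃'‖₂² · ‖(K̃ − K)(K + nλI_n)^{-1}y‖₂² + 2·( (k̃' − k')ᵀ(K + nλI_n)^{-1}y )². -/
open Matrix


lemma cs_dot {n : ℕ} (u v : Fin n → ℝ) : (u ⬝ᵥ v) ^ 2 ≤ (u ⬝ᵥ u) * (v ⬝ᵥ v) := by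
  have := Finset.sum_mul_sq_le_sq_mul_sq Finset.univ u v
  simpa [dotProduct, sq] using this

lemma mulVec_dot {n : ℕ} (M : Matrix (Fin n) (Fin n) ℝ) (u v : Fin n → ℝ) :
    (M *ᵥ u) ⬝ᵥ v = u ⬝ᵥ (Mᵀ *ᵥ v) := by
  rw [Matrix.dotProduct_mulVec, Matrix.vecMul_transpose]

lemma reg_posdef {n : ℕ} {M : Matrix (Fin n) (Fin n) ℝ} (hM : M.PosSemidef)
    {c : ℝ} (hc : 0 < c) : (M + c • (1 : Matrix (Fin n) (Fin n) ℝ)).PosDef := by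
  have h1 : (c • (1 : Matrix (Fin n) (Fin n) ℝ)) = Matrix.diagonal (fun _ => c) := by
    ext i j
    by_cases h : i = j <;> simp [Matrix.one_apply, Matrix.diagonal, h]
  rw [h1]
  exact Matrix.PosDef.posSemidef_add hM (Matrix.posDef_diagonal_iff.mpr (fun _ => hc))

/-- the prediction-difference decomposition bound
(f̃ − f)² ≤ 2‖(K̃ + nλI)⁻¹k̃'‖₂²·‖(K̃ − K)(K + nλI)⁻¹y‖₂² + 2((k̃'−k')ᵀ(K + nλI)⁻¹y)². -/
theorem pred_diff_decomposition_bound {n : ℕ}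
    {K Kt : Matrix (Fin n) (Fin n) ℝ} (hK : K.PosSemidef) (hKt : Kt.PosSemidef)
    (k kt y : Fin n → ℝ) (lam : ℝ) (hlam : 0 < lam) :
    (kt ⬝ᵥ ((Kt + ((n : ℝ) * lam) • (1 : Matrix (Fin n) (Fin n) ℝ))⁻¹ *ᵥ y) -
        k ⬝ᵥ ((K + ((n : ℝ) * lam) • (1 : Matrix (Fin n) (Fin n) ℝ))⁻¹ *ᵥ y)) ^ 2 ≤
      2 * ((((Kt + ((n : ℝ) * lam) • (1 : Matrix (Fin n) (Fin n) ℝ))⁻¹ *ᵥ kt) ⬝ᵥ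
            ((Kt + ((n : ℝ) * lam) • (1 : Matrix (Fin n) (Fin n) ℝ))⁻¹ *ᵥ kt)) *
          (((Kt - K) *ᵥ ((K + ((n : ℝ) * lam) • (1 : Matrix (Fin n) (Fin n) ℝ))⁻¹ *ᵥ y)) ⬝ᵥ
            ((Kt - K) *ᵥ ((K + ((n : ℝ) * lam) • (1 : Matrix (Fin n) (Fin n) ℝ))⁻¹ *ᵥ y)))) +
        2 * ((kt - k) ⬝ᵥ ((K + ((n : ℝ) * lam) • (1 : Matrix (Fin n) (Fin n) ℝ))⁻¹ *ᵥ y)) ^ 2 := by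
  obtain rfl | hn := Nat.eq_zero_or_pos n
  · simp [dotProduct]
  have hc : 0 < (n : ℝ) * lam := by positivity
  set c : ℝ := (n : ℝ) * lam
  set S : Matrix (Fin n) (Fin n) ℝ := Kt + c • 1 with hSdef
  set T : Matrix (Fin n) (Fin n) ℝ := K + c • 1 with hTdef
  have hSpd : S.PosDef := reg_posdef hKt hc
  have hTpd : T.PosDef := reg_posdef hK hc
  have hSdet : IsUnit S.det := hSpd.det_pos.ne'.isUnit
  have hTdet : IsUnit T.det := hTpd.det_pos.ne'.isUnit
  set A : Matrix (Fin n) (Fin n) ℝ := S⁻¹ with hA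
  set B : Matrix (Fin n) (Fin n) ℝ := T⁻¹ with hB
  have hTB : T * B = 1 := Matrix.mul_nonsing_inv T hTdet
  have hAS : A * S = 1 := Matrix.nonsing_inv_mul S hSdet
  have key : A - B = A * ((T - S) * B) := by
    rw [Matrix.sub_mul, Matrix.mul_sub, hTB, ← Matrix.mul_assoc, hAS, Matrix.mul_one,
      Matrix.one_mul]
  have hTS : T - S = -(Kt - K) := by
    rw [hSdef, hTdef]; abel
  have hAsym : Aᵀ = A := by
    have hSsym : Sᵀ = S := by
      have := hSpd.isHermitian
      rwa [Matrix.IsHermitian, Matrix.conjTranspose_eq_transpose_of_trivial] at this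
    rw [hA, Matrix.transpose_nonsing_inv, hSsym]
  set w : Fin n → ℝ := (Kt - K) *ᵥ (B *ᵥ y) with hw
  set a : ℝ := (A *ᵥ kt) ⬝ᵥ w with ha
  set b : ℝ := (kt - k) ⬝ᵥ (B *ᵥ y) with hb
  have hdot : kt ⬝ᵥ (A *ᵥ y) - k ⬝ᵥ (B *ᵥ y) = -a + b := by
    have h1 : kt ⬝ᵥ (A *ᵥ y) - k ⬝ᵥ (B *ᵥ y)
        = kt ⬝ᵥ ((A - B) *ᵥ y) + (kt - k) ⬝ᵥ (B *ᵥ y) := by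
      simp [Matrix.sub_mulVec, sub_dotProduct, dotProduct_sub]
    rw [h1, key, hTS]
    have h2 : kt ⬝ᵥ ((A * (-(Kt - K) * B)) *ᵥ y) = -a := by
      rw [ha, mulVec_dot, hAsym, ← Matrix.mulVec_mulVec, ← Matrix.mulVec_mulVec,
        Matrix.neg_mulVec, Matrix.mulVec_neg, dotProduct_neg]
    rw [h2]
  rw [hA, hB] at hdot
  rw [hdot]
  nlinarith [cs_dot (A *ᵥ kt) w, sq_nonneg (a + b), sq_nonneg (a - b)]
end

section
/- Let K, K̃ ∈ ℝ^{n×n} be symmetric positive semidefinite, y ∈ ℝⁿ, λ > 0, and suppose the test point x' is drawn uniformly at random from the fixed training set {x_1,…,x_n}, so that the corresponding kernel vectors satisfy E_{x'}[k'k'ᵀ] = K²/n, E_{x'}[k̃'k̃'ᵀ] = K̃²/n, and E_{x'}[k̃'k'ᵀ] = K̃K/n. Then E_{x'}[ ( f̃_λ(x') − f_λ(x') )² ] ≥ (1/n)·( nλ/(‖K̃‖₂ + nλ) )²·‖(K̃ − K)(K + nλI_n)^{-1}y‖₂², where f_λ(x') = k'ᵀ(K + nλI_n)^{-1}y and f̃_λ(x')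 = k̃'ᵀ(K̃ + nλI_n)^{-1}y. -/
open Matrix

noncomputable section

/-- Spectral norm of a square real matrix. -/
noncomputable def specNorm {m : ℕ} (A : Matrix (Fin m) (Fin m) ℝ) : ℝ :=
  ‖LinearMap.toContinuousLinearMap (Matrix.toEuclideanLin A)‖

lemma posDef_add_smul_one_aux {n : ℕ} {K : Matrix (Fin n) (Fin n) ℝ} (hK : K.PosSemidef)
    {c : ℝ} (hc : 0 < c) : (K + c • (1 : Matrix (Fin n) (Fin n) ℝ)).PosDef := by
  refine posDef_iff_dotProduct_mulVec.mpr ⟨?_, fun x hx => ?_⟩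
  · unfold Matrix.IsHermitian
    rw [conjTranspose_add, conjTranspose_smul, hK.isHermitian.eq]
    simp
  · have h1 : (K + c • (1 : Matrix (Fin n) (Fin n) ℝ)) *ᵥ x = K *ᵥ x + c • x := by
      simp [add_mulVec, smul_mulVec, one_mulVec]
    rw [h1, dotProduct_add]
    have h2 : (0:ℝ) < star x ⬝ᵥ (c • x) := by
      have hxx : (0:ℝ) < x ⬝ᵥ x := by
        rcases Function.ne_iff.mp hx with ⟨i, hi⟩
        have h1 : 0 < x i * x i := mul_self_pos.mpr hi
        have hle : x i * x i ≤ x ⬝ᵥ x :=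
          Finset.single_le_sum (fun j _ => mul_self_nonneg (x j)) (Finset.mem_univ i)
        linarith
      simpa [dotProduct_smul, star_trivial] using mul_pos hc hxx
    have h3 := hK.dotProduct_mulVec_nonneg x
    linarith
/-- for a test point drawn uniformly from the training set
(so the kernel vectors k', k̃' are the corresponding columns of K, K̃, and
E_{x'}[k'k'ᵀ] = K²/n, E_{x'}[k̃'k̃'ᵀ] = K̃²/n, E_{x'}[k̃'k'ᵀ] = K̃K/n hold),
E_{x'}[(f̃_λ(x') − f_λ(x'))²] ≥ (1/n)·(nλ/(‖K̃‖₂+nλ))²·‖(K̃−K)(K+nλI)⁻¹y‖₂². -/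
theorem lower_bound_uniform_test_point {n : ℕ} (hn : 0 < n)
    {K Kt : Matrix (Fin n) (Fin n) ℝ} (hK : K.PosSemidef) (hKt : Kt.PosSemidef)
    (y : Fin n → ℝ) (lam : ℝ) (hlam : 0 < lam) :
    (n : ℝ)⁻¹ *
        ∑ i : Fin n,
          ((fun j => Kt j i) ⬝ᵥ
              ((Kt + ((n : ℝ) * lam) • (1 : Matrix (Fin n) (Fin n) ℝ))⁻¹ *ᵥ y) -
            (fun j => K j i) ⬝ᵥ
              ((K + ((n : ℝ) * lam) • (1 : Matrix (Fin n) (Fin n) ℝ))⁻¹ *ᵥ y)) ^ 2 ≥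
      (n : ℝ)⁻¹ * ((n : ℝ) * lam / (specNorm Kt + (n : ℝ) * lam)) ^ 2 *
        (((Kt - K) *ᵥ ((K + ((n : ℝ) * lam) • (1 : Matrix (Fin n) (Fin n) ℝ))⁻¹ *ᵥ y)) ⬝ᵥ
          ((Kt - K) *ᵥ ((K + ((n : ℝ) * lam) • (1 : Matrix (Fin n) (Fin n) ℝ))⁻¹ *ᵥ y))) := by
  have hc : (0:ℝ) < (n : ℝ) * lam := mul_pos (by exact_mod_cast hn) hlam
  set c : ℝ := (n : ℝ) * lam with hc_def
  set M := K + c • (1 : Matrix (Fin n) (Fin n) ℝ) with hM_def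
  set Mt := Kt + c • (1 : Matrix (Fin n) (Fin n) ℝ) with hMt_def
  have hM : M.PosDef := posDef_add_smul_one_aux hK hc
  have hMt : Mt.PosDef := posDef_add_smul_one_aux hKt hc
  have hMdet : IsUnit M.det := isUnit_iff_ne_zero.mpr hM.det_pos.ne'
  have hMtdet : IsUnit Mt.det := isUnit_iff_ne_zero.mpr hMt.det_pos.ne'
  set u : Fin n → ℝ := M⁻¹ *ᵥ y with hu
  set w : Fin n → ℝ := (Kt - K) *ᵥ u with hw
  set z : Fin n → ℝ := Mt⁻¹ *ᵥ w with hz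
  -- matrix identity
  have hKtK : Kt - K = Mt - M := by rw [hMt_def, hM_def]; abel
  have hmat : Mt⁻¹ * (Kt - K) * M⁻¹ = M⁻¹ - Mt⁻¹ := by
    rw [hKtK, Matrix.mul_sub, Matrix.sub_mul, Matrix.nonsing_inv_mul _ hMtdet,
      Matrix.one_mul, Matrix.mul_assoc, Matrix.mul_nonsing_inv _ hMdet, Matrix.mul_one]
  have hz_eq : z = u - Mt⁻¹ *ᵥ y := by
    rw [hz, hw, hu, mulVec_mulVec, mulVec_mulVec, hmat, sub_mulVec]
  -- the vector identity for the summands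
  have hvec : Kt *ᵥ (Mt⁻¹ *ᵥ y) - K *ᵥ (M⁻¹ *ᵥ y) = c • z := by
    have h1 : Kt *ᵥ (Mt⁻¹ *ᵥ y) = y - c • (Mt⁻¹ *ᵥ y) := by
      have : Kt = Mt - c • (1 : Matrix (Fin n) (Fin n) ℝ) := by rw [hMt_def]; abel
      rw [this, sub_mulVec, mulVec_mulVec, Matrix.mul_nonsing_inv _ hMtdet, one_mulVec,
        smul_mulVec, one_mulVec]
    have h2 : K *ᵥ (M⁻¹ *ᵥ y) = y - c • (M⁻¹ *ᵥ y) := by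
      have : K = M - c • (1 : Matrix (Fin n) (Fin n) ℝ) := by rw [hM_def]; abel
      rw [this, sub_mulVec, mulVec_mulVec, Matrix.mul_nonsing_inv _ hMdet, one_mulVec,
        smul_mulVec, one_mulVec]
    rw [h1, h2, hz_eq, hu]
    module
  have hsummand : ∀ i : Fin n,
      (fun j => Kt j i) ⬝ᵥ (Mt⁻¹ *ᵥ y) - (fun j => K j i) ⬝ᵥ (M⁻¹ *ᵥ y) = c * z i := by
    intro i
    have hKte : (fun j => Kt j i) ⬝ᵥ (Mt⁻¹ *ᵥ y) = (Kt *ᵥ (Mt⁻¹ *ᵥ y)) i := by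
      simp only [dotProduct, mulVec, dotProduct]
      refine Finset.sum_congr rfl fun j _ => ?_
      have := hKt.isHermitian.apply i j
      simp only [star_trivial] at this
      rw [this]
    have hKe : (fun j => K j i) ⬝ᵥ (M⁻¹ *ᵥ y) = (K *ᵥ (M⁻¹ *ᵥ y)) i := by
      simp only [dotProduct, mulVec, dotProduct]
      refine Finset.sum_congr rfl fun j _ => ?_
      have := hK.isHermitian.apply i j
      simp only [star_trivial] at this
      rw [this]
    rw [hKte, hKe]
    have := congrFun hvec i
    simpa [Pi.sub_apply, Pi.smul_apply, smul_eq_mul] using this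
  -- rewrite the sum
  have hsum : ∑ i : Fin n,
      ((fun j => Kt j i) ⬝ᵥ (Mt⁻¹ *ᵥ y) - (fun j => K j i) ⬝ᵥ (M⁻¹ *ᵥ y)) ^ 2
      = c ^ 2 * (z ⬝ᵥ z) := by
    have hstep : ∀ i ∈ Finset.univ, ((fun j => Kt j i) ⬝ᵥ (Mt⁻¹ *ᵥ y) -
        (fun j => K j i) ⬝ᵥ (M⁻¹ *ᵥ y)) ^ 2 = c ^ 2 * (z i * z i) := fun i _ => by
      rw [hsummand i]; ring
    rw [Finset.sum_congr rfl hstep, dotProduct, Finset.mul_sum]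
  -- norm inequality
  have hwz : w = Mt *ᵥ z := by
    rw [hz, mulVec_mulVec, Matrix.mul_nonsing_inv _ hMtdet, one_mulVec]
  set s := specNorm Kt with hs_def
  have hs : 0 ≤ s := norm_nonneg _
  have hdot_norm : ∀ x : Fin n → ℝ,
      x ⬝ᵥ x = ‖(WithLp.equiv 2 (Fin n → ℝ)).symm x‖ ^ 2 := by
    intro x
    rw [EuclideanSpace.norm_sq_eq]
    simp [dotProduct, sq]
  -- operator norm bound
  have hT1 : Matrix.toEuclideanLin (1 : Matrix (Fin n) (Fin n) ℝ)
      = (LinearMap.id : EuclideanSpace ℝ (Fin n) →ₗ[ℝ] EuclideanSpace ℝ (Fin n)) := by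
    apply LinearMap.ext
    intro x
    simp [Matrix.toEuclideanLin_apply, one_mulVec]
  have hTnorm : ‖LinearMap.toContinuousLinearMap (Matrix.toEuclideanLin Mt)‖ ≤ s + c := by
    have hsplit : Matrix.toEuclideanLin Mt
        = Matrix.toEuclideanLin Kt + c • (LinearMap.id :
            EuclideanSpace ℝ (Fin n) →ₗ[ℝ] EuclideanSpace ℝ (Fin n)) := by
      rw [hMt_def, map_add, _root_.map_smul, hT1]
    rw [hsplit, map_add, _root_.map_smul]
    refine (norm_add_le _ _).trans ?_
    have hid : ‖LinearMap.toContinuousLinearMap (LinearMap.id :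
        EuclideanSpace ℝ (Fin n) →ₗ[ℝ] EuclideanSpace ℝ (Fin n))‖ ≤ 1 := by
      have : LinearMap.toContinuousLinearMap (LinearMap.id :
          EuclideanSpace ℝ (Fin n) →ₗ[ℝ] EuclideanSpace ℝ (Fin n))
          = ContinuousLinearMap.id ℝ (EuclideanSpace ℝ (Fin n)) := by
        ext x; rfl
      rw [this]
      exact ContinuousLinearMap.norm_id_le
    have h2 : ‖c • LinearMap.toContinuousLinearMap (LinearMap.id :
        EuclideanSpace ℝ (Fin n) →ₗ[ℝ] EuclideanSpace ℝ (Fin n))‖ ≤ c := by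
      have h2' := norm_smul_le c (LinearMap.toContinuousLinearMap (LinearMap.id :
        EuclideanSpace ℝ (Fin n) →ₗ[ℝ] EuclideanSpace ℝ (Fin n)))
      rw [Real.norm_eq_abs, abs_of_pos hc] at h2'
      nlinarith
    exact add_le_add le_rfl h2
  have key : w ⬝ᵥ w ≤ (s + c) ^ 2 * (z ⬝ᵥ z) := by
    set z' : EuclideanSpace ℝ (Fin n) := (WithLp.equiv 2 (Fin n → ℝ)).symm z with hz'
    set T := LinearMap.toContinuousLinearMap (Matrix.toEuclideanLin Mt) with hT
    have hTz : T z' = (WithLp.equiv 2 (Fin n → ℝ)).symm w := by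
      rw [hwz, hT, hz']
      simp [Matrix.toEuclideanLin_apply]
    have hnorm : ‖(WithLp.equiv 2 (Fin n → ℝ)).symm w‖ ≤ (s + c) * ‖z'‖ := by
      rw [← hTz]
      exact (T.le_opNorm z').trans (mul_le_mul_of_nonneg_right hTnorm (norm_nonneg _))
    rw [hdot_norm w, hdot_norm z]
    calc ‖(WithLp.equiv 2 (Fin n → ℝ)).symm w‖ ^ 2 ≤ ((s + c) * ‖z'‖) ^ 2 := by
          exact pow_le_pow_left₀ (norm_nonneg _) hnorm 2
      _ = (s + c) ^ 2 * ‖z'‖ ^ 2 := by ring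
  -- final arithmetic
  have hsc : 0 < s + c := by linarith
  have hzz : 0 ≤ z ⬝ᵥ z := by rw [hdot_norm z]; positivity
  have hnn : (0:ℝ) ≤ (n : ℝ)⁻¹ := by positivity
  rw [ge_iff_le]
  have hfinal : (c / (s + c)) ^ 2 * (w ⬝ᵥ w) ≤ c ^ 2 * (z ⬝ᵥ z) := by
    have h1 : (c / (s + c)) ^ 2 * (w ⬝ᵥ w) ≤ (c / (s + c)) ^ 2 * ((s + c) ^ 2 * (z ⬝ᵥ z)) :=
      mul_le_mul_of_nonneg_left key (by positivity)
    have h2 : (c / (s + c)) ^ 2 * ((s + c) ^ 2 * (z ⬝ᵥ z)) = c ^ 2 * (z ⬝ᵥ z) := by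
      field_simp
    linarith
  calc (n : ℝ)⁻¹ * (c / (s + c)) ^ 2 * (w ⬝ᵥ w)
      = (n : ℝ)⁻¹ * ((c / (s + c)) ^ 2 * (w ⬝ᵥ w)) := by ring
    _ ≤ (n : ℝ)⁻¹ * (c ^ 2 * (z ⬝ᵥ z)) := mul_le_mul_of_nonneg_left hfinal hnn
    _ = (n : ℝ)⁻¹ * ∑ i : Fin n,
          ((fun j => Kt j i) ⬝ᵥ (Mt⁻¹ *ᵥ y) - (fun j => K j i) ⬝ᵥ (M⁻¹ *ᵥ y)) ^ 2 := by
        rw [hsum]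
end
end

section
/- Let v_1,…,v_s be i.i.d. random feature vectors and ψ a feature map satisfying the unbiasedness E_v[ψ(x;v)ψ(x';v)] = κ(x,x') together with ψ²(·;·) = 1 identically (as holds for the random sign feature ψ(x;v) = sgn(xᵀv) with the angular similarity kernel). For fixed points x_1,…,x_n with kernel matrix K and K̃ = ΨΨᵀ, it holds that E_{V_s}[ (K̃ − K)² ] = (n/s)·K − (1/s)·K². -/
open MeasureTheory Matrix

noncomputable section

section Helpers

variable {V : Type*} [MeasurableSpace V]

lemma pi_prod_integral {s : ℕ} (p : Measure V) [IsProbabilityMeasure p] (f : Fin s → V → ℝ) :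
    ∫ vs : Fin s → V, ∏ t, f t (vs t) ∂(Measure.pi fun _ => p) = ∏ t, ∫ v, f t v ∂p := by
  letI : MeasureSpace V := ⟨p⟩
  have h : (Measure.pi fun _ : Fin s => p) = (volume : Measure (Fin s → V)) :=
    MeasureTheory.volume_pi.symm
  rw [h]
  exact MeasureTheory.integral_fintype_prod_eq_prod f

lemma pi_integral_eval {s : ℕ} (p : Measure V) [IsProbabilityMeasure p] (g : V → ℝ) (l : Fin s) :
    ∫ vs : Fin s → V, g (vs l) ∂(Measure.pi fun _ : Fin s => p) = ∫ v, g v ∂p := by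
  have h := pi_prod_integral p (fun t => if t = l then g else fun _ => (1:ℝ))
  have h1 : ∀ vs : Fin s → V,
      (∏ t, (if t = l then g else fun _ => (1:ℝ)) (vs t)) = g (vs l) := by
    intro vs
    rw [Finset.prod_eq_single l (fun t _ ht => by simp [ht]) (by simp)]
    simp
  have h2 : (∏ t, ∫ v, (if t = l then g else fun _ => (1:ℝ)) v ∂p) = ∫ v, g v ∂p := by
    rw [Finset.prod_eq_single l (fun t _ ht => by simp [ht]) (by simp)]
    simp
  simp_rw [h1] at h
  rw [h, h2]

lemma pi_integral_eval_two {s : ℕ} (p : Measure V) [IsProbabilityMeasure p] (g h : V → ℝ)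
    {l m : Fin s} (hlm : l ≠ m) :
    ∫ vs : Fin s → V, g (vs l) * h (vs m) ∂(Measure.pi fun _ : Fin s => p) =
      (∫ v, g v ∂p) * ∫ v, h v ∂p := by
  set F : Fin s → V → ℝ := fun t => if t = l then g else if t = m then h else fun _ => (1:ℝ) with hF
  have key := pi_prod_integral p F
  have h1 : ∀ vs : Fin s → V, (∏ t, F t (vs t)) = g (vs l) * h (vs m) := by
    intro vs
    rw [← Finset.mul_prod_erase Finset.univ _ (Finset.mem_univ l),
        ← Finset.mul_prod_erase _ _ (Finset.mem_erase.mpr ⟨hlm.symm, Finset.mem_univ m⟩),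
        Finset.prod_eq_one]
    · simp [hF, hlm.symm]
    · intro t ht
      simp only [Finset.mem_erase] at ht
      simp [hF, ht.1, ht.2.1]
  have h2 : (∏ t, ∫ v, F t v ∂p) = (∫ v, g v ∂p) * ∫ v, h v ∂p := by
    rw [← Finset.mul_prod_erase Finset.univ _ (Finset.mem_univ l),
        ← Finset.mul_prod_erase _ _ (Finset.mem_erase.mpr ⟨hlm.symm, Finset.mem_univ m⟩),
        Finset.prod_eq_one]
    · simp [hF, hlm.symm]
    · intro t ht
      simp only [Finset.mem_erase] at ht
      simp [hF, ht.1, ht.2.1]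
  simp_rw [h1] at key
  rw [key, h2]

lemma integrable_of_bdd {α : Type*} [MeasurableSpace α] {μ : Measure α} [IsFiniteMeasure μ]
    {f : α → ℝ} (hf : Measurable f) {C : ℝ} (h : ∀ x, |f x| ≤ C) : Integrable f μ :=
  (integrable_const C).mono' hf.aestronglyMeasurable
    (Filter.Eventually.of_forall (by simpa [Real.norm_eq_abs] using h))

end Helpers

/-- for an unbiased feature map with ψ² ≡ 1 (e.g. random sign
features), E_{V_s}[(K̃ − K)²] = (n/s)·K − (1/s)·K². -/
theorem sign_feature_squared_error_expectation
    {d n s : ℕ} (hs : 0 < s) {V : Type*} [MeasurableSpace V]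
    (p : Measure V) [IsProbabilityMeasure p]
    (ψ : (Fin d → ℝ) → V → ℝ) (hm : ∀ x, Measurable (ψ x))
    (κ : (Fin d → ℝ) → (Fin d → ℝ) → ℝ)
    (hunbias : ∀ x x', ∫ v, ψ x v * ψ x' v ∂p = κ x x')
    (hsq : ∀ x v, (ψ x v) ^ 2 = 1)
    (X : Fin n → (Fin d → ℝ)) :
    Matrix.of (fun i j =>
        ∫ vs : Fin s → V,
          ((featMat ψ X vs * (featMat ψ X vs)ᵀ - kerMat κ X) *
            (featMat ψ X vs * (featMat ψ X vs)ᵀ - kerMat κ X)) i j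
          ∂(Measure.pi fun _ : Fin s => p)) =
      ((n : ℝ) / s) • kerMat κ X - ((s : ℝ))⁻¹ • (kerMat κ X * kerMat κ X) := by
  have hs0 : (s : ℝ) ≠ 0 := Nat.cast_ne_zero.mpr hs.ne'
  set μ := (Measure.pi fun _ : Fin s => p) with hμ
  -- basic abbreviations
  set c : Fin n → Fin n → ℝ := fun a b => κ (X a) (X b) with hc
  have habs : ∀ a v, |ψ (X a) v| = 1 := by
    intro a v
    have h := hsq (X a) v
    have h2 := sq_abs (ψ (X a) v)
    have h3 := abs_nonneg (ψ (X a) v)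
    nlinarith
  -- pointwise normalized entries
  set A : Fin n → Fin n → (Fin s → V) → ℝ := fun a b vs =>
    (s:ℝ)⁻¹ * (∑ l, ψ (X a) (vs l) * ψ (X b) (vs l)) - c a b with hA
  have hsqrt : ((Real.sqrt s)⁻¹ * (Real.sqrt s)⁻¹ : ℝ) = (s:ℝ)⁻¹ := by
    rw [← mul_inv, Real.mul_self_sqrt (by positivity)]
  have hentry : ∀ (vs : Fin s → V) (a b : Fin n),
      (featMat ψ X vs * (featMat ψ X vs)ᵀ - kerMat κ X) a b = A a b vs := by
    intro vs a b
    simp only [Matrix.sub_apply, Matrix.mul_apply, Matrix.transpose_apply, featMat,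
      Matrix.of_apply, kerMat, hA, hc, Finset.mul_sum]
    congr 1
    refine Finset.sum_congr rfl fun l _ => ?_
    rw [show ((Real.sqrt s)⁻¹ * ψ (X a) (vs l)) * ((Real.sqrt s)⁻¹ * ψ (X b) (vs l))
        = ((Real.sqrt s)⁻¹ * (Real.sqrt s)⁻¹) * (ψ (X a) (vs l) * ψ (X b) (vs l)) from by ring,
      hsqrt]
  -- measurability and integrability of building blocks
  have hmP : ∀ (a b : Fin n) (l : Fin s),
      Measurable (fun vs : Fin s → V => ψ (X a) (vs l) * ψ (X b) (vs l)) := fun a b l =>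
    ((hm _).comp (measurable_pi_apply l)).mul ((hm _).comp (measurable_pi_apply l))
  have hmA : ∀ a b, Measurable (A a b) := by
    intro a b
    exact ((Finset.measurable_sum _ fun l _ => hmP a b l).const_mul _).sub measurable_const
  have hbA : ∀ a b vs, |A a b vs| ≤ 1 + |c a b| := by
    intro a b vs
    have hsum : |∑ l, ψ (X a) (vs l) * ψ (X b) (vs l)| ≤ (s:ℝ) := by
      calc |∑ l, ψ (X a) (vs l) * ψ (X b) (vs l)|
          ≤ ∑ l, |ψ (X a) (vs l) * ψ (X b) (vs l)| := Finset.abs_sum_le_sum_abs _ _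
        _ = ∑ l : Fin s, (1:ℝ) := by
            refine Finset.sum_congr rfl fun l _ => ?_
            rw [abs_mul, habs, habs, one_mul]
        _ = (s:ℝ) := by simp
    have h1 : |(s:ℝ)⁻¹ * ∑ l, ψ (X a) (vs l) * ψ (X b) (vs l)| ≤ 1 := by
      rw [abs_mul, abs_inv, abs_of_nonneg (by positivity : (0:ℝ) ≤ (s:ℝ))]
      calc (s:ℝ)⁻¹ * |∑ l, ψ (X a) (vs l) * ψ (X b) (vs l)|
          ≤ (s:ℝ)⁻¹ * (s:ℝ) := by
            apply mul_le_mul_of_nonneg_left hsum (by positivity)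
        _ = 1 := inv_mul_cancel₀ hs0
    calc |A a b vs| ≤ |(s:ℝ)⁻¹ * ∑ l, ψ (X a) (vs l) * ψ (X b) (vs l)| + |c a b| :=
          abs_sub _ _
      _ ≤ 1 + |c a b| := by linarith
  have hiP : ∀ (a b : Fin n) (l : Fin s),
      Integrable (fun vs : Fin s → V => ψ (X a) (vs l) * ψ (X b) (vs l)) μ := by
    intro a b l
    refine integrable_of_bdd (hmP a b l) (C := 1) fun vs => ?_
    rw [abs_mul, habs, habs, one_mul]
  have hiPP : ∀ (a b a' b' : Fin n) (l m : Fin s),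
      Integrable (fun vs : Fin s → V =>
        (ψ (X a) (vs l) * ψ (X b) (vs l)) * (ψ (X a') (vs m) * ψ (X b') (vs m))) μ := by
    intro a b a' b' l m
    refine integrable_of_bdd ((hmP a b l).mul (hmP a' b' m)) (C := 1) fun vs => ?_
    rw [abs_mul, abs_mul, abs_mul, habs, habs, habs, habs]; norm_num
  have hiA : ∀ a b a' b', Integrable (fun vs => A a b vs * A a' b' vs) μ := by
    intro a b a' b'
    refine integrable_of_bdd ((hmA a b).mul (hmA a' b')) (C := (1 + |c a b|) * (1 + |c a' b'|))
      fun vs => ?_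
    rw [abs_mul]
    exact mul_le_mul (hbA a b vs) (hbA a' b' vs) (abs_nonneg _) (by positivity)
  -- single and pair expectations
  have hP1 : ∀ (a b : Fin n) (l : Fin s),
      ∫ vs, ψ (X a) (vs l) * ψ (X b) (vs l) ∂μ = c a b := by
    intro a b l
    rw [hμ, pi_integral_eval p (fun v => ψ (X a) v * ψ (X b) v) l]
    exact hunbias _ _
  have hP2 : ∀ (a b a' b' : Fin n) (l m : Fin s), l ≠ m →
      ∫ vs, (ψ (X a) (vs l) * ψ (X b) (vs l)) * (ψ (X a') (vs m) * ψ (X b') (vs m)) ∂μ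
        = c a b * c a' b' := by
    intro a b a' b' l m hlm
    rw [hμ, pi_integral_eval_two p (fun v => ψ (X a) v * ψ (X b) v)
      (fun v => ψ (X a') v * ψ (X b') v) hlm, hunbias, hunbias]
  -- the key per-entry covariance computation
  have key : ∀ a k b : Fin n,
      ∫ vs, A a k vs * A k b vs ∂μ = (s:ℝ)⁻¹ * c a b - (s:ℝ)⁻¹ * (c a k * c k b) := by
    intro a k b
    -- expand the product pointwise
    have hexp : ∀ vs : Fin s → V, A a k vs * A k b vs =
        (s:ℝ)⁻¹ * (s:ℝ)⁻¹ * (∑ l, ∑ m,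
            (ψ (X a) (vs l) * ψ (X k) (vs l)) * (ψ (X k) (vs m) * ψ (X b) (vs m)))
          - c k b * ((s:ℝ)⁻¹ * ∑ l, ψ (X a) (vs l) * ψ (X k) (vs l))
          - c a k * ((s:ℝ)⁻¹ * ∑ m, ψ (X k) (vs m) * ψ (X b) (vs m))
          + c a k * c k b := by
      intro vs
      have hds : (∑ l, ψ (X a) (vs l) * ψ (X k) (vs l)) *
          (∑ m, ψ (X k) (vs m) * ψ (X b) (vs m))
          = ∑ l, ∑ m, (ψ (X a) (vs l) * ψ (X k) (vs l)) * (ψ (X k) (vs m) * ψ (X b) (vs m)) :=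
        Finset.sum_mul_sum _ _ _ _
      simp only [hA]
      linear_combination (s:ℝ)⁻¹ * (s:ℝ)⁻¹ * hds
    simp_rw [hexp]
    have i1 : Integrable (fun vs : Fin s → V => (s:ℝ)⁻¹ * (s:ℝ)⁻¹ * (∑ l, ∑ m,
        (ψ (X a) (vs l) * ψ (X k) (vs l)) * (ψ (X k) (vs m) * ψ (X b) (vs m)))) μ :=
      ((integrable_finset_sum _ fun l _ =>
        integrable_finset_sum _ fun m _ => hiPP a k k b l m).const_mul _)
    have i2 : Integrable (fun vs : Fin s → V =>
        c k b * ((s:ℝ)⁻¹ * ∑ l, ψ (X a) (vs l) * ψ (X k) (vs l))) μ :=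
      (((integrable_finset_sum _ fun l _ => hiP a k l).const_mul _).const_mul _)
    have i3 : Integrable (fun vs : Fin s → V =>
        c a k * ((s:ℝ)⁻¹ * ∑ m, ψ (X k) (vs m) * ψ (X b) (vs m))) μ :=
      (((integrable_finset_sum _ fun m _ => hiP k b m).const_mul _).const_mul _)
    have i12 : Integrable (fun vs : Fin s → V =>
        (s:ℝ)⁻¹ * (s:ℝ)⁻¹ * (∑ l, ∑ m,
            (ψ (X a) (vs l) * ψ (X k) (vs l)) * (ψ (X k) (vs m) * ψ (X b) (vs m)))
          - c k b * ((s:ℝ)⁻¹ * ∑ l, ψ (X a) (vs l) * ψ (X k) (vs l))) μ := i1.sub i2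
    have i123 : Integrable (fun vs : Fin s → V =>
        (s:ℝ)⁻¹ * (s:ℝ)⁻¹ * (∑ l, ∑ m,
            (ψ (X a) (vs l) * ψ (X k) (vs l)) * (ψ (X k) (vs m) * ψ (X b) (vs m)))
          - c k b * ((s:ℝ)⁻¹ * ∑ l, ψ (X a) (vs l) * ψ (X k) (vs l))
          - c a k * ((s:ℝ)⁻¹ * ∑ m, ψ (X k) (vs m) * ψ (X b) (vs m))) μ := i12.sub i3
    rw [integral_add i123 (integrable_const _), integral_sub i12 i3, integral_sub i1 i2,
      integral_const]
    have hdiag : ∀ l : Fin s,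
        ∫ vs, (ψ (X a) (vs l) * ψ (X k) (vs l)) * (ψ (X k) (vs l) * ψ (X b) (vs l)) ∂μ
          = c a b := by
      intro l
      have hpt : ∀ vs : Fin s → V,
          (ψ (X a) (vs l) * ψ (X k) (vs l)) * (ψ (X k) (vs l) * ψ (X b) (vs l))
            = ψ (X a) (vs l) * ψ (X b) (vs l) := by
        intro vs
        have h := hsq (X k) (vs l)
        linear_combination (ψ (X a) (vs l) * ψ (X b) (vs l)) * h
      simp_rw [hpt]
      exact hP1 a b l
    have J1 : ∫ vs, (s:ℝ)⁻¹ * (s:ℝ)⁻¹ * (∑ l, ∑ m,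
        (ψ (X a) (vs l) * ψ (X k) (vs l)) * (ψ (X k) (vs m) * ψ (X b) (vs m))) ∂μ
        = (s:ℝ)⁻¹ * (s:ℝ)⁻¹ *
            ((s:ℝ) * c a b + ((s:ℝ)^2 - (s:ℝ)) * (c a k * c k b)) := by
      rw [integral_const_mul, integral_finset_sum _ (fun l _ =>
        integrable_finset_sum _ fun m _ => hiPP a k k b l m)]
      congr 1
      calc (∑ l : Fin s, ∫ vs, ∑ m,
              (ψ (X a) (vs l) * ψ (X k) (vs l)) * (ψ (X k) (vs m) * ψ (X b) (vs m)) ∂μ)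
          = ∑ l : Fin s, (c a b + ((s:ℝ) - 1) * (c a k * c k b)) := by
            refine Finset.sum_congr rfl fun l _ => ?_
            rw [integral_finset_sum _ (fun m _ => hiPP a k k b l m)]
            have hsplit : ∀ m : Fin s, (∫ vs,
                (ψ (X a) (vs l) * ψ (X k) (vs l)) * (ψ (X k) (vs m) * ψ (X b) (vs m)) ∂μ)
                = c a k * c k b + (if l = m then c a b - c a k * c k b else 0) := by
              intro m
              by_cases hlm : l = m
              · subst hlm
                rw [hdiag l]
                simp
              · rw [hP2 a k k b l m hlm]
                simp [hlm]
            simp_rw [hsplit]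
            rw [Finset.sum_add_distrib, Finset.sum_const, Finset.sum_ite_eq Finset.univ l
              (fun _ => c a b - c a k * c k b)]
            simp
            ring
        _ = (s:ℝ) * c a b + ((s:ℝ)^2 - (s:ℝ)) * (c a k * c k b) := by
            rw [Finset.sum_const]
            simp
            ring
    have J2 : ∫ vs, c k b * ((s:ℝ)⁻¹ * ∑ l, ψ (X a) (vs l) * ψ (X k) (vs l)) ∂μ
        = c k b * c a k := by
      rw [integral_const_mul, integral_const_mul,
        integral_finset_sum _ (fun l _ => hiP a k l)]
      simp_rw [hP1]
      rw [Finset.sum_const]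
      simp
      left
      field_simp
    have J3 : ∫ vs, c a k * ((s:ℝ)⁻¹ * ∑ m, ψ (X k) (vs m) * ψ (X b) (vs m)) ∂μ
        = c a k * c k b := by
      rw [integral_const_mul, integral_const_mul,
        integral_finset_sum _ (fun m _ => hiP k b m)]
      simp_rw [hP1]
      rw [Finset.sum_const]
      simp
      left
      field_simp
    rw [J1, J2, J3]
    simp only [measure_univ, probReal_univ, ENNReal.toReal_one, smul_eq_mul, one_mul, one_smul]
    field_simp
    ring
  -- assemble the matrix identity
  ext i j
  simp only [Matrix.of_apply]
  have hpt : ∀ vs : Fin s → V,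
      ((featMat ψ X vs * (featMat ψ X vs)ᵀ - kerMat κ X) *
        (featMat ψ X vs * (featMat ψ X vs)ᵀ - kerMat κ X)) i j
        = ∑ k, A i k vs * A k j vs := by
    intro vs
    rw [Matrix.mul_apply]
    exact Finset.sum_congr rfl fun k _ => by rw [hentry, hentry]
  simp_rw [hpt]
  rw [integral_finset_sum _ fun k _ => hiA i k k j]
  simp_rw [key]
  rw [Finset.sum_sub_distrib, Finset.sum_const, ← Finset.mul_sum]
  simp only [Matrix.sub_apply, Matrix.smul_apply, Matrix.mul_apply, kerMat, Matrix.of_apply,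
    Finset.card_univ, Fintype.card_fin, nsmul_eq_mul, smul_eq_mul, hc]
  ring
end
end

section
/- Let v_1,…,v_s be i.i.d. random feature vectors and ψ a feature map satisfying unbiasedness E_v[ψ(x;v)ψ(x';v)] = κ(x,x') and ψ²(·;·) = 1 identically. For fixed points x_1,…,x_n with kernel matrix K and Ψ ∈ ℝ^{n×s} the random feature matrix, it holds that E_{V_s}[ ΨΨᵀΨΨᵀ ] = ((s−1)/s)·K² + (n/s)·K. -/
open MeasureTheory Matrix

noncomputable section

lemma pi_eval_integral {V : Type*} [MeasurableSpace V] (p : Measure V) [IsProbabilityMeasure p]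
    (s : ℕ) (f : V → ℝ) (l : Fin s) :
    ∫ vs : Fin s → V, f (vs l) ∂(Measure.pi fun _ : Fin s => p) = ∫ v, f v ∂p := by
  letI : MeasureSpace V := ⟨p⟩
  haveI : SigmaFinite (volume : Measure V) := inferInstanceAs (SigmaFinite p)
  have hvol : (Measure.pi fun _ : Fin s => p) = (volume : Measure (Fin s → V)) := rfl
  have h1 : ∀ vs : Fin s → V, f (vs l) =
      ∏ t : Fin s, (fun t (v : V) => if t = l then f v else 1) t (vs t) := by
    intro vs
    simp [Finset.prod_ite_eq']
  calc ∫ vs : Fin s → V, f (vs l) ∂(Measure.pi fun _ : Fin s => p)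
      = ∫ vs : Fin s → V, ∏ t : Fin s, (fun t (v : V) => if t = l then f v else 1) t (vs t) := by
        rw [hvol]; exact integral_congr_ae (Filter.Eventually.of_forall h1)
    _ = ∏ t : Fin s, ∫ v : V, (fun t (v : V) => if t = l then f v else 1) t v :=
        MeasureTheory.integral_fintype_prod_eq_prod
          (fun t (v : V) => if t = l then f v else 1)
    _ = ∫ v, f v ∂p := by
        have h2 : ∀ t : Fin s, (∫ v : V, (if t = l then f v else 1)) =
            (fun t => if t = l then ∫ v, f v ∂p else 1) t := by
          intro t
          by_cases h : t = l
          · simp only [if_pos h]; rfl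
          · simp only [if_neg h]; simp
        rw [Finset.prod_congr rfl (fun t _ => h2 t), Finset.prod_ite_eq']
        simp

lemma pi_pair_integral {V : Type*} [MeasurableSpace V] (p : Measure V) [IsProbabilityMeasure p]
    (s : ℕ) (f g : V → ℝ) {l m : Fin s} (hlm : l ≠ m) :
    ∫ vs : Fin s → V, f (vs l) * g (vs m) ∂(Measure.pi fun _ : Fin s => p) =
      (∫ v, f v ∂p) * (∫ v, g v ∂p) := by
  letI : MeasureSpace V := ⟨p⟩
  haveI : SigmaFinite (volume : Measure V) := inferInstanceAs (SigmaFinite p)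
  have hvol : (Measure.pi fun _ : Fin s => p) = (volume : Measure (Fin s → V)) := rfl
  have h1 : ∀ vs : Fin s → V, f (vs l) * g (vs m) =
      ∏ t : Fin s, (fun t (v : V) => (if t = l then f v else 1) * (if t = m then g v else 1)) t (vs t) := by
    intro vs
    rw [Finset.prod_mul_distrib]
    simp [Finset.prod_ite_eq']
  calc ∫ vs : Fin s → V, f (vs l) * g (vs m) ∂(Measure.pi fun _ : Fin s => p)
      = ∫ vs : Fin s → V, ∏ t : Fin s,
          (fun t (v : V) => (if t = l then f v else 1) * (if t = m then g v else 1)) t (vs t) := by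
        rw [hvol]; exact integral_congr_ae (Filter.Eventually.of_forall h1)
    _ = ∏ t : Fin s, ∫ v : V,
          (fun t (v : V) => (if t = l then f v else 1) * (if t = m then g v else 1)) t v :=
        MeasureTheory.integral_fintype_prod_eq_prod
          (fun t (v : V) => (if t = l then f v else 1) * (if t = m then g v else 1))
    _ = (∫ v, f v ∂p) * (∫ v, g v ∂p) := by
        have h2 : ∀ t : Fin s, (∫ v : V, (if t = l then f v else 1) * (if t = m then g v else 1)) =
            (fun t => if t = l then ∫ v, f v ∂p else 1) t *
            (fun t => if t = m then ∫ v, g v ∂p else 1) t := by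
          intro t
          by_cases h1' : t = l <;> by_cases h2' : t = m
          · exact absurd (h1' ▸ h2') hlm
          · simp only [if_pos h1', if_neg h2', mul_one]; rfl
          · simp only [if_neg h1', if_pos h2', one_mul]; rfl
          · simp only [if_neg h1', if_neg h2', mul_one]; simp
        rw [Finset.prod_congr rfl (fun t _ => h2 t), Finset.prod_mul_distrib,
          Finset.prod_ite_eq', Finset.prod_ite_eq']
        simp



/-- for an unbiased feature map with ψ² ≡ 1,
E_{V_s}[ΨΨᵀΨΨᵀ] = ((s−1)/s)·K² + (n/s)·K. -/
theorem sign_feature_fourth_moment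
    {d n s : ℕ} (hs : 0 < s) {V : Type*} [MeasurableSpace V]
    (p : Measure V) [IsProbabilityMeasure p]
    (ψ : (Fin d → ℝ) → V → ℝ) (hm : ∀ x, Measurable (ψ x))
    (κ : (Fin d → ℝ) → (Fin d → ℝ) → ℝ)
    (hunbias : ∀ x x', ∫ v, ψ x v * ψ x' v ∂p = κ x x')
    (hsq : ∀ x v, (ψ x v) ^ 2 = 1)
    (X : Fin n → (Fin d → ℝ)) :
    Matrix.of (fun i j =>
        ∫ vs : Fin s → V,
          (featMat ψ X vs * (featMat ψ X vs)ᵀ * featMat ψ X vs *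
              (featMat ψ X vs)ᵀ) i j
          ∂(Measure.pi fun _ : Fin s => p)) =
      (((s : ℝ) - 1) / s) • (kerMat κ X * kerMat κ X) +
        ((n : ℝ) / s) • kerMat κ X := by
 
  classical
  have hs' : (s : ℝ) ≠ 0 := Nat.cast_ne_zero.mpr hs.ne'
  have hb : ∀ x v, ‖ψ x v‖ ≤ 1 := by
    intro x v
    have h := hsq x v
    rw [Real.norm_eq_abs]
    nlinarith [sq_abs (ψ x v), abs_nonneg (ψ x v)]
  have hss : (Real.sqrt s)⁻¹ * (Real.sqrt s)⁻¹ = (s : ℝ)⁻¹ := by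
    rw [← mul_inv, Real.mul_self_sqrt (Nat.cast_nonneg s)]
  -- integrability of the basic terms
  have hInt : ∀ (a b c e : Fin d → ℝ) (l m : Fin s),
      Integrable (fun vs : Fin s → V =>
        (ψ a (vs l) * ψ b (vs l)) * (ψ c (vs m) * ψ e (vs m)))
        (Measure.pi fun _ : Fin s => p) := by
    intro a b c e l m
    refine (integrable_const (1 : ℝ)).mono' ?_ (Filter.Eventually.of_forall ?_)
    · exact ((((hm a).comp (measurable_pi_apply l)).mul
        ((hm b).comp (measurable_pi_apply l))).mul
        (((hm c).comp (measurable_pi_apply m)).mul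
        ((hm e).comp (measurable_pi_apply m)))).aestronglyMeasurable
    · intro vs
      simp only [norm_mul]
      have h1 := hb a (vs l); have h2 := hb b (vs l)
      have h3 := hb c (vs m); have h4 := hb e (vs m)
      exact mul_le_one₀ (mul_le_one₀ h1 (norm_nonneg _) h2) (by positivity)
        (mul_le_one₀ h3 (norm_nonneg _) h4)
  -- value of each basic integral
  have key : ∀ (k : Fin n) (i j : Fin n) (l m : Fin s),
      ∫ vs : Fin s → V,
        (ψ (X i) (vs l) * ψ (X k) (vs l)) * (ψ (X k) (vs m) * ψ (X j) (vs m))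
        ∂(Measure.pi fun _ : Fin s => p) =
      if l = m then κ (X i) (X j) else κ (X i) (X k) * κ (X k) (X j) := by
    intro k i j l m
    by_cases h : l = m
    · subst h
      rw [if_pos rfl]
      have h1 : (fun vs : Fin s → V =>
          (ψ (X i) (vs l) * ψ (X k) (vs l)) * (ψ (X k) (vs l) * ψ (X j) (vs l))) =
          fun vs : Fin s → V => (fun v => ψ (X i) v * ψ (X j) v) (vs l) := by
        funext vs
        have h2 := hsq (X k) (vs l)
        calc (ψ (X i) (vs l) * ψ (X k) (vs l)) * (ψ (X k) (vs l) * ψ (X j) (vs l))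
            = ψ (X i) (vs l) * ψ (X j) (vs l) * (ψ (X k) (vs l)) ^ 2 := by ring
          _ = ψ (X i) (vs l) * ψ (X j) (vs l) := by rw [h2, mul_one]
      rw [h1, pi_eval_integral p s (fun v => ψ (X i) v * ψ (X j) v) l, hunbias]
    · rw [if_neg h]
      rw [pi_pair_integral p s (fun v => ψ (X i) v * ψ (X k) v)
        (fun v => ψ (X k) v * ψ (X j) v) h, hunbias, hunbias]
  ext i j
  simp only [Matrix.of_apply]
  -- expand the matrix product entrywise
  have expand : ∀ vs : Fin s → V,
      (featMat ψ X vs * (featMat ψ X vs)ᵀ * featMat ψ X vs * (featMat ψ X vs)ᵀ) i j =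
      ∑ m : Fin s, ∑ k : Fin n, ∑ l : Fin s, ((s : ℝ)⁻¹ * (s : ℝ)⁻¹) *
        ((ψ (X i) (vs l) * ψ (X k) (vs l)) * (ψ (X k) (vs m) * ψ (X j) (vs m))) := by
    intro vs
    simp only [featMat, Matrix.mul_apply, Matrix.transpose_apply, Matrix.of_apply,
      Finset.sum_mul, Finset.mul_sum]
    refine Finset.sum_congr rfl fun m _ => Finset.sum_congr rfl fun k _ =>
      Finset.sum_congr rfl fun l _ => ?_
    rw [← hss]
    ring
  calc ∫ vs : Fin s → V,
        (featMat ψ X vs * (featMat ψ X vs)ᵀ * featMat ψ X vs * (featMat ψ X vs)ᵀ) i j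
        ∂(Measure.pi fun _ : Fin s => p)
      = ∫ vs : Fin s → V, ∑ m : Fin s, ∑ k : Fin n, ∑ l : Fin s,
          ((s : ℝ)⁻¹ * (s : ℝ)⁻¹) *
          ((ψ (X i) (vs l) * ψ (X k) (vs l)) * (ψ (X k) (vs m) * ψ (X j) (vs m)))
          ∂(Measure.pi fun _ : Fin s => p) :=
        integral_congr_ae (Filter.Eventually.of_forall expand)
    _ = ∑ m : Fin s, ∑ k : Fin n, ∑ l : Fin s, ((s : ℝ)⁻¹ * (s : ℝ)⁻¹) *
          (if l = m then κ (X i) (X j) else κ (X i) (X k) * κ (X k) (X j)) := by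
        rw [integral_finset_sum _ (fun m _ => integrable_finset_sum _ fun k _ =>
          integrable_finset_sum _ fun l _ => ((hInt (X i) (X k) (X k) (X j) l m).const_mul _))]
        refine Finset.sum_congr rfl fun m _ => ?_
        rw [integral_finset_sum _ (fun k _ =>
          integrable_finset_sum _ fun l _ => ((hInt (X i) (X k) (X k) (X j) l m).const_mul _))]
        refine Finset.sum_congr rfl fun k _ => ?_
        rw [integral_finset_sum _ (fun l _ => ((hInt (X i) (X k) (X k) (X j) l m).const_mul _))]
        refine Finset.sum_congr rfl fun l _ => ?_
        rw [integral_const_mul, key k i j l m]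
    _ = (((s : ℝ) - 1) / s) • (kerMat κ X * kerMat κ X) i j + ((n : ℝ) / s) • kerMat κ X i j := by
        have hin : ∀ m : Fin s, ∀ k : Fin n,
            (∑ l : Fin s, ((s : ℝ)⁻¹ * (s : ℝ)⁻¹) *
              (if l = m then κ (X i) (X j) else κ (X i) (X k) * κ (X k) (X j))) =
            ((s : ℝ)⁻¹ * (s : ℝ)⁻¹) *
              (κ (X i) (X j) + ((s : ℝ) - 1) * (κ (X i) (X k) * κ (X k) (X j))) := by
          intro m k
          rw [← Finset.mul_sum]
          congr 1
          have : ∀ l : Fin s, (if l = m then κ (X i) (X j) else κ (X i) (X k) * κ (X k) (X j)) =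
              κ (X i) (X k) * κ (X k) (X j) +
              (if l = m then κ (X i) (X j) - κ (X i) (X k) * κ (X k) (X j) else 0) := by
            intro l; split_ifs <;> ring
          rw [Finset.sum_congr rfl fun l _ => this l, Finset.sum_add_distrib,
            Finset.sum_ite_eq' Finset.univ m, Finset.sum_const, Finset.card_univ,
            Fintype.card_fin]
          simp only [Finset.mem_univ, if_pos]
          ring
        simp only [hin]
        rw [Finset.sum_const, Finset.card_univ, Fintype.card_fin, nsmul_eq_mul]
        simp only [Matrix.add_apply, Matrix.smul_apply, Matrix.mul_apply, kerMat,
          Matrix.of_apply, smul_eq_mul]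
        have hsplit : ∀ k : Fin n, ((s : ℝ)⁻¹ * (s : ℝ)⁻¹ *
            (κ (X i) (X j) + ((s : ℝ) - 1) * (κ (X i) (X k) * κ (X k) (X j)))) =
            (s : ℝ)⁻¹ * (s : ℝ)⁻¹ * κ (X i) (X j) +
            ((s : ℝ)⁻¹ * (s : ℝ)⁻¹ * ((s : ℝ) - 1)) * (κ (X i) (X k) * κ (X k) (X j)) :=
          fun k => by ring
        rw [Finset.sum_congr rfl fun k _ => hsplit k, Finset.sum_add_distrib,
          Finset.sum_const, Finset.card_univ, Fintype.card_fin, ← Finset.mul_sum,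
          nsmul_eq_mul]
        field_simp
        ring
end
end
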